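/- arXiv:1101.0778 — 9 statements merged into one kernel-verified Lean document; each statement's English description precedes it below -/
import Mathlib

section
/- Let h : ℝⁿ → ℝ and X : ℝⁿ → ℝⁿ be C^∞, let Z = {x ∈ ℝⁿ : X(x) = 0}, and assume: (i) ⟨X(x), ∇h(x)⟩ < 0 for every x ∉ Z; (ii) there is an open set U ⊇ Z such that X(x) = −∇h(x) for all x ∈ U. Then there exists a C^∞ map g from ℝⁿ to the symmetric positive-definite n×n real matrices such that g(x) is the identity matrix for all x in some open neighborhood of Z, and g(x) · X(x) = −∇h(x) for every x ∈ ℝⁿ; equivalently, X = −grad_g h for the Riemannian metric on ℝⁿ defined by g. -/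
/-- Row computation for the metric matrix. -/
lemma stmt_0_row (n : ℕ) (a b v : Fin n → ℝ) (q p : ℝ) (i : Fin n) :
    ∑ j, ((if i = j then (1:ℝ) else 0) - a i * a j / q + b i * b j / p) * v j
      = v i - a i * (∑ j, a j * v j) / q + b i * (∑ j, b j * v j) / p := by
  have h1 : a i * (∑ j, a j * v j) / q = ∑ j, a i * a j / q * v j := by
    rw [Finset.mul_sum, Finset.sum_div]
    exact Finset.sum_congr rfl fun j _ => by ring
  have h2 : b i * (∑ j, b j * v j) / p = ∑ j, b i * b j / p * v j := by
    rw [Finset.mul_sum, Finset.sum_div]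
    exact Finset.sum_congr rfl fun j _ => by ring
  rw [h1, h2]
  simp only [sub_mul, add_mul, Finset.sum_add_distrib, Finset.sum_sub_distrib, ite_mul,
    one_mul, zero_mul, Finset.sum_ite_eq, Finset.mem_univ, if_true]

/-- Positivity of the quadratic form. -/
lemma stmt_0_quad (n : ℕ) (a b v : Fin n → ℝ)
    (hq : 0 < ∑ i, a i * a i) (hp : 0 < ∑ i, a i * b i) (hv : v ≠ 0) :
    0 < ∑ i, v i * (v i - a i * (∑ j, a j * v j) / (∑ k, a k * a k)
        + b i * (∑ j, b j * v j) / (∑ k, a k * b k)) := by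
  set Q : ℝ := ∑ i, a i * a i with hQ
  set P : ℝ := ∑ i, a i * b i with hP
  set s : ℝ := ∑ j, a j * v j with hs
  set t : ℝ := ∑ j, b j * v j with ht
  set c : ℝ := s / Q with hc
  have hQ0 : Q ≠ 0 := ne_of_gt hq
  have hP0 : P ≠ 0 := ne_of_gt hp
  have expandL : ∑ i, v i * (v i - a i * s / Q + b i * t / P)
      = (∑ i, v i * v i) - (s/Q) * s + (t/P) * t := by
    have : ∀ i ∈ Finset.univ, v i * (v i - a i * s / Q + b i * t / P)
        = v i * v i - (s/Q) * (a i * v i) + (t/P) * (b i * v i) := fun i _ => by ring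
    rw [Finset.sum_congr rfl this]
    simp only [Finset.sum_add_distrib, Finset.sum_sub_distrib, ← Finset.mul_sum, ← hs, ← ht]
  have expandR : ∑ i, (v i - c * a i)^2
      = (∑ i, v i * v i) - 2 * c * s + c^2 * Q := by
    have : ∀ i ∈ Finset.univ, (v i - c * a i)^2
        = v i * v i - 2 * c * (a i * v i) + c^2 * (a i * a i) := fun i _ => by ring
    rw [Finset.sum_congr rfl this]
    simp only [Finset.sum_add_distrib, Finset.sum_sub_distrib, ← Finset.mul_sum, ← hs, ← hQ]
  have key : ∑ i, v i * (v i - a i * s / Q + b i * t / P)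
      = (∑ i, (v i - c * a i)^2) + t^2 / P := by
    rw [expandL, expandR, hc]
    field_simp
    ring
  rw [key]
  have hS : 0 ≤ ∑ i, (v i - c * a i)^2 := Finset.sum_nonneg fun i _ => sq_nonneg _
  by_cases ht0 : t = 0
  · have hS' : (∑ i, (v i - c * a i)^2) ≠ 0 := by
      intro h0
      have hall := (Finset.sum_eq_zero_iff_of_nonneg (fun i (_ : i ∈ Finset.univ) => sq_nonneg (v i - c * a i))).mp h0
      have hva : ∀ i, v i = c * a i := by
        intro i
        have := hall i (Finset.mem_univ i)
        have := (pow_eq_zero_iff two_ne_zero).mp this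
        linarith [sub_eq_zero.mp this]
      have htc : t = c * P := by
        rw [ht, hP, Finset.mul_sum]
        exact Finset.sum_congr rfl fun j _ => by rw [hva j]; ring
      have hc0 : c = 0 := by
        rcases mul_eq_zero.mp (htc ▸ ht0) with h | h
        · exact h
        · exact absurd h hP0
      apply hv
      funext i
      rw [hva i, hc0, zero_mul]; rfl
    have : 0 < ∑ i, (v i - c * a i)^2 := lt_of_le_of_ne hS (Ne.symm hS')
    have ht2 : 0 ≤ t^2 / P := div_nonneg (sq_nonneg _) hp.le
    linarith
  · have : 0 < t^2 / P := div_pos (by positivity) hp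
    linarith

/-- A gradient-like vector field on `ℝⁿ` is the negative gradient of `h` with respect to
a suitable smooth Riemannian metric `g` that is the Euclidean metric near the zero set. -/
theorem stmt_0 (n : ℕ) (h : (Fin n → ℝ) → ℝ) (X : (Fin n → ℝ) → (Fin n → ℝ))
    (hh : ContDiff ℝ (⊤ : ℕ∞) h) (hX : ContDiff ℝ (⊤ : ℕ∞) X)
    (grad : (Fin n → ℝ) → (Fin n → ℝ))
    (hgrad : ∀ x i, grad x i = fderiv ℝ h x (Pi.single i 1))
    (h1 : ∀ x, X x ≠ 0 → ∑ i, X x i * grad x i < 0)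
    (h2 : ∃ U : Set (Fin n → ℝ), IsOpen U ∧ {x | X x = 0} ⊆ U ∧ ∀ x ∈ U, X x = -grad x) :
    ∃ g : (Fin n → ℝ) → Matrix (Fin n) (Fin n) ℝ,
      (∀ i j, ContDiff ℝ (⊤ : ℕ∞) fun x => g x i j) ∧
      (∀ x, (g x).IsSymm ∧ (g x).PosDef) ∧
      (∃ V : Set (Fin n → ℝ), IsOpen V ∧ {x | X x = 0} ⊆ V ∧ ∀ x ∈ V, g x = 1) ∧
      (∀ x, (g x).mulVec (X x) = -grad x) := by
  obtain ⟨U, hUopen, hZU, hU⟩ := h2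
  set b : (Fin n → ℝ) → (Fin n → ℝ) := fun x i => -(grad x i) with hb
  set q : (Fin n → ℝ) → ℝ := fun x => ∑ k, X x k * X x k with hqdef
  set p : (Fin n → ℝ) → ℝ := fun x => ∑ k, X x k * b x k with hpdef
  set g : (Fin n → ℝ) → Matrix (Fin n) (Fin n) ℝ :=
    fun x => Matrix.of fun i j =>
      (if i = j then (1:ℝ) else 0) - X x i * X x j / q x + b x i * b x j / p x with hgdef
  -- positivity of q and p off the zero set
  have hqpos : ∀ x, X x ≠ 0 → 0 < q x := by
    intro x hx
    obtain ⟨i, hi⟩ := Function.ne_iff.mp hx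
    exact Finset.sum_pos' (fun j _ => mul_self_nonneg _)
      ⟨i, Finset.mem_univ i, mul_self_pos.mpr hi⟩
  have hppos : ∀ x, X x ≠ 0 → 0 < p x := by
    intro x hx
    have : p x = -∑ i, X x i * grad x i := by
      rw [hpdef, ← Finset.sum_neg_distrib]
      exact Finset.sum_congr rfl fun i _ => by simp [hb]
    rw [this]
    linarith [h1 x hx]
  -- on U, b agrees with X and g is the identity
  have hbU : ∀ x ∈ U, b x = X x := by
    intro x hx
    funext i
    rw [hb]
    exact (congrFun (hU x hx) i).symm
  have hgU : ∀ x ∈ U, g x = 1 := by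
    intro x hx
    ext i j
    have hpq : p x = q x := by
      rw [hpdef, hqdef]
      exact Finset.sum_congr rfl fun k _ => by rw [hbU x hx]
    simp only [hgdef, Matrix.of_apply, hbU x hx, hpq, Matrix.one_apply]
    ring
  -- smoothness
  have hO : IsOpen {x : Fin n → ℝ | X x ≠ 0} :=
    (isClosed_eq hX.continuous continuous_const).isOpen_compl
  have hXi : ∀ i, ContDiff ℝ (⊤ : ℕ∞) fun x => X x i := fun i => contDiff_pi.mp hX i
  have hgradi : ∀ i, ContDiff ℝ (⊤ : ℕ∞) fun x => grad x i := by
    intro i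
    have hfd : ContDiff ℝ (⊤ : ℕ∞) (fderiv ℝ h) := hh.fderiv_right (by norm_cast)
    have heq : (fun x => grad x i) = fun x => fderiv ℝ h x (Pi.single i 1) :=
      funext fun x => hgrad x i
    rw [heq]
    exact hfd.clm_apply contDiff_const
  have hbi : ∀ i, ContDiff ℝ (⊤ : ℕ∞) fun x => b x i := fun i => (hgradi i).neg
  have hqC : ContDiff ℝ (⊤ : ℕ∞) q :=
    ContDiff.sum fun k _ => (hXi k).mul (hXi k)
  have hpC : ContDiff ℝ (⊤ : ℕ∞) p :=
    ContDiff.sum fun k _ => (hXi k).mul (hbi k)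
  have hsmooth : ∀ i j, ContDiff ℝ (⊤ : ℕ∞) fun x => g x i j := by
    intro i j
    rw [contDiff_iff_contDiffAt]
    intro x
    by_cases hx : X x = 0
    · -- x ∈ U, g is constant there
      have hCU : ContDiffOn ℝ (⊤ : ℕ∞) (fun x => g x i j) U := by
        apply (contDiffOn_const (c := if i = j then (1:ℝ) else 0)).congr
        intro y hy
        rw [hgU y hy, Matrix.one_apply]
      exact hCU.contDiffAt (hUopen.mem_nhds (hZU hx))
    · have hCO : ContDiffOn ℝ (⊤ : ℕ∞) (fun x => g x i j) {x | X x ≠ 0} := by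
        simp only [hgdef, Matrix.of_apply]
        apply ContDiffOn.add
        · apply ContDiffOn.sub contDiffOn_const
          exact ContDiffOn.div ((hXi i).mul (hXi j)).contDiffOn hqC.contDiffOn
            fun y hy => ne_of_gt (hqpos y hy)
        · exact ContDiffOn.div ((hbi i).mul (hbi j)).contDiffOn hpC.contDiffOn
            fun y hy => ne_of_gt (hppos y hy)
      exact hCO.contDiffAt (hO.mem_nhds hx)
  refine ⟨g, hsmooth, ?_, ⟨U, hUopen, hZU, hgU⟩, ?_⟩
  · -- symmetry and positive definiteness
    intro x
    constructor
    · by_cases hx : x ∈ U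
      · rw [hgU x hx]; exact Matrix.isSymm_one
      · ext i j
        simp only [hgdef, Matrix.transpose_apply, Matrix.of_apply]
        by_cases hij : i = j
        · subst hij; ring
        · rw [if_neg hij, if_neg (Ne.symm hij)]; ring
    · by_cases hx : X x = 0
      · rw [hgU x (hZU hx)]
        exact Matrix.PosDef.one
      · refine Matrix.posDef_iff_dotProduct_mulVec.mpr ⟨?_, ?_⟩
        · -- Hermitian
          ext i j
          simp only [hgdef, Matrix.conjTranspose_apply, Matrix.of_apply, star_trivial]
          by_cases hij : i = j
          · subst hij; ring
          · rw [if_neg hij, if_neg (Ne.symm hij)]; ring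
        · intro v hv
          have hrow : ∀ i, ((g x).mulVec v) i
              = v i - X x i * (∑ j, X x j * v j) / q x + b x i * (∑ j, b x j * v j) / p x := by
            intro i
            show ∑ j, ((if i = j then (1:ℝ) else 0) - X x i * X x j / q x
              + b x i * b x j / p x) * v j = _
            exact stmt_0_row n (X x) (b x) v (q x) (p x) i
          have : dotProduct (star v) ((g x).mulVec v) = ∑ i, v i * (v i
              - X x i * (∑ j, X x j * v j) / (∑ k, X x k * X x k)
              + b x i * (∑ j, b x j * v j) / (∑ k, X x k * b x k)) := by
            simp only [dotProduct, Pi.star_apply, star_trivial]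
            exact Finset.sum_congr rfl fun i _ => by rw [hrow i]
          rw [this]
          exact stmt_0_quad n (X x) (b x) v (hqpos x hx) (hppos x hx) hv
  · -- g x ⬝ X x = - grad x
    intro x
    by_cases hx : X x = 0
    · have hbz : -grad x = 0 := by
        rw [← hU x (hZU hx)]; exact hx
      rw [hx, Matrix.mulVec_zero, hbz]
    · funext i
      have : ((g x).mulVec (X x)) i
          = X x i - X x i * (∑ j, X x j * X x j) / q x + b x i * (∑ j, b x j * X x j) / p x := by
        show ∑ j, ((if i = j then (1:ℝ) else 0) - X x i * X x j / q x
          + b x i * b x j / p x) * X x j = _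
        exact stmt_0_row n (X x) (b x) (X x) (q x) (p x) i
      rw [this]
      have hqx : (∑ j, X x j * X x j) = q x := rfl
      have hpx : (∑ j, b x j * X x j) = p x :=
        Finset.sum_congr rfl fun j _ => by ring
      rw [hqx, hpx, mul_div_assoc, div_self (ne_of_gt (hqpos x hx)),
        mul_div_assoc, div_self (ne_of_gt (hppos x hx)), mul_one, mul_one]
      simp [hb]
end

section
/- Let M be a compact smooth (C^∞) finite-dimensional manifold without boundary (Hausdorff, second countable), let X be a smooth vector field on M whose zero set consists of isolated points, and let h : M → ℝ be a smooth function with d_x h(X(x)) < 0 for every x with X(x) ≠ 0. Then for every integral curve γ : ℝ → M of X, both limits lim_{t→+∞} γ(t) and lim_{t→−∞} γ(t) exist, and each of them is a zero of X. -/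
open scoped Manifold
open Set Filter Metric

set_option linter.unusedSectionVars false
set_option linter.unusedVariables false
set_option maxHeartbeats 1000000

private lemma neg_neg_trick {F : Type*} [NormedAddCommGroup F] [NormedSpace ℝ F]
    (L : F →L[ℝ] ℝ) (v : F) : (-L) (-v) = L v := by simp

section Aux

variable {d : ℕ} {M : Type*} [TopologicalSpace M] [T2Space M]
    [SecondCountableTopology M] [CompactSpace M]
    [ChartedSpace (EuclideanSpace ℝ (Fin d)) M]
    [IsManifold (𝓡 d) (⊤ : ℕ∞) M]
    {X : (x : M) → TangentSpace (𝓡 d) x} {γ : ℝ → M}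

lemma aux_hasDerivAt (hγ : IsMIntegralCurve γ X) (p : M) {t : ℝ}
    (hsrc : γ t ∈ (extChartAt (𝓡 d) p).source) :
    HasDerivAt ((extChartAt (𝓡 d) p) ∘ γ)
      (tangentCoordChange (𝓡 d) (γ t) p (γ t) (X (γ t))) t := by
  have hsrc := extChartAt_source (𝓡 d) p ▸ hsrc
  rw [hasDerivAt_iff_hasFDerivAt]
  refine hasMFDerivAt_iff_hasFDerivAt.1 ?_
  apply (HasMFDerivAt.comp t
    (hasMFDerivAt_extChartAt (I := 𝓡 d) hsrc) (hγ t)).congr_mfderiv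
  refine ContinuousLinearMap.ext ?_
  intro a
  change (mfderiv (𝓡 d) (𝓡 d) (chartAt (EuclideanSpace ℝ (Fin d)) p) (γ t)) ((show ℝ from a) • X (γ t)) = (show ℝ from a) • tangentCoordChange (𝓡 d) (γ t) p (γ t) (X (γ t))
  rw [map_smul, mfderiv_chartAt_eq_tangentCoordChange hsrc]
  rfl

lemma aux_memK {p : M} {r : ℝ}
    (hball : closedBall (extChartAt (𝓡 d) p p) r ⊆ (extChartAt (𝓡 d) p).target) {x : M} :
    x ∈ (extChartAt (𝓡 d) p).symm '' closedBall (extChartAt (𝓡 d) p p) r ↔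
      x ∈ (extChartAt (𝓡 d) p).source ∧
        dist (extChartAt (𝓡 d) p x) (extChartAt (𝓡 d) p p) ≤ r := by
  constructor
  · rintro ⟨y, hy, rfl⟩
    refine ⟨(extChartAt (𝓡 d) p).map_target (hball hy), ?_⟩
    rw [(extChartAt (𝓡 d) p).right_inv (hball hy)]
    exact hy
  · rintro ⟨hx, hd⟩
    exact ⟨extChartAt (𝓡 d) p x, hd, (extChartAt (𝓡 d) p).left_inv hx⟩

lemma aux_K_compact {p : M} {r : ℝ}
    (hball : closedBall (extChartAt (𝓡 d) p p) r ⊆ (extChartAt (𝓡 d) p).target) :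
    IsCompact ((extChartAt (𝓡 d) p).symm '' closedBall (extChartAt (𝓡 d) p p) r) :=
  (isCompact_closedBall _ _).image_of_continuousOn
    ((continuousOn_extChartAt_symm p).mono hball)

lemma aux_crossing (hγ : IsMIntegralCurve γ X) (p : M) {r : ℝ} (hr : 0 < r)
    (hball : closedBall (extChartAt (𝓡 d) p p) r ⊆ (extChartAt (𝓡 d) p).target)
    {t₁ t₂ : ℝ} (ht : t₁ ≤ t₂)
    (h₁ : γ t₁ ∈ (extChartAt (𝓡 d) p).source)
    (hd₁ : dist (extChartAt (𝓡 d) p (γ t₁)) (extChartAt (𝓡 d) p p) < r) :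
    ∃ m ∈ Icc t₁ t₂,
      MapsTo γ (Icc t₁ m)
        ((extChartAt (𝓡 d) p).symm '' closedBall (extChartAt (𝓡 d) p p) r) ∧
      (m = t₂ ∨ dist (extChartAt (𝓡 d) p (γ m)) (extChartAt (𝓡 d) p p) = r) := by
  set e := extChartAt (𝓡 d) p with he
  set K := e.symm '' closedBall (e p) r with hKdef
  have hKcl : IsClosed K := (aux_K_compact hball).isClosed
  have hγc : Continuous γ := hγ.continuous
  set O : Set M := e.source ∩ (e ⁻¹' ball (e p) r) with hOdef
  have hOopen : IsOpen O :=
    (continuousOn_extChartAt p).isOpen_inter_preimage (isOpen_extChartAt_source p)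
      isOpen_ball
  have hOK : O ⊆ K := by
    rintro x ⟨hx1, hx2⟩
    exact (aux_memK hball).2 ⟨hx1, le_of_lt hx2⟩
  have h1O : γ t₁ ∈ O := ⟨h₁, by simpa using hd₁⟩
  set B : Set ℝ := {s | s ∈ Icc t₁ t₂ ∧ MapsTo γ (Icc t₁ s) K} with hBdef
  have ht₁B : t₁ ∈ B := by
    refine ⟨⟨le_refl _, ht⟩, ?_⟩
    intro u hu
    rw [show u = t₁ by exact le_antisymm hu.2 hu.1]
    exact hOK h1O
  have hBne : B.Nonempty := ⟨t₁, ht₁B⟩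
  have hBbdd : BddAbove B := ⟨t₂, fun s hs => hs.1.2⟩
  set m := sSup B with hm
  have hm₁ : t₁ ≤ m := le_csSup hBbdd ht₁B
  have hm₂ : m ≤ t₂ := csSup_le hBne fun s hs => hs.1.2
  have hmem : MapsTo γ (Icc t₁ m) K := by
    intro u hu
    rcases eq_or_lt_of_le hu.2 with hum | hum
    · -- u = m : use closure
      have hsubB : B ⊆ γ ⁻¹' K := by
        intro s hs
        exact hs.2 ⟨hs.1.1, le_refl _⟩
      have : m ∈ closure B := csSup_mem_closure hBne hBbdd
      have : m ∈ γ ⁻¹' K :=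
        (IsClosed.closure_subset_iff (hKcl.preimage hγc)).2 hsubB this
      rwa [hum]
    · obtain ⟨s, hsB, hus⟩ := exists_lt_of_lt_csSup hBne hum
      exact hsB.2 ⟨hu.1, le_of_lt hus⟩
  refine ⟨m, ⟨hm₁, hm₂⟩, hmem, ?_⟩
  by_contra hcon
  push_neg at hcon
  obtain ⟨hmt₂, hdm⟩ := hcon
  have hmlt : m < t₂ := lt_of_le_of_ne hm₂ hmt₂
  have hγmK : γ m ∈ K := hmem ⟨hm₁, le_refl _⟩
  have hγmO : γ m ∈ O := by
    obtain ⟨hsrc, hle⟩ := (aux_memK hball).1 hγmK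
    exact ⟨hsrc, mem_ball.2 (lt_of_le_of_ne hle hdm)⟩
  -- extend beyond m
  have : γ ⁻¹' O ∈ nhds m := (hOopen.preimage hγc).mem_nhds hγmO
  obtain ⟨ε, hε, hsub⟩ := Metric.mem_nhds_iff.1 this
  set m' := min (m + ε / 2) t₂ with hm'
  have hmm' : m < m' := lt_min (by linarith) hmlt
  have hm'B : m' ∈ B := by
    refine ⟨⟨le_trans hm₁ (le_of_lt hmm'), min_le_right _ _⟩, ?_⟩
    intro u hu
    rcases le_or_gt u m with h | h
    · exact hmem ⟨hu.1, h⟩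
    · apply hOK
      apply hsub
      have : u ≤ m + ε / 2 := le_trans hu.2 (min_le_left _ _)
      simp only [mem_ball, Real.dist_eq]
      rw [abs_sub_lt_iff]
      constructor <;> linarith
  have := le_csSup hBbdd hm'B
  exact absurd this (not_le.2 hmm')

lemma aux_speed (hγ : IsMIntegralCurve γ X) (p : M) {r C : ℝ}
    (hball : closedBall (extChartAt (𝓡 d) p p) r ⊆ (extChartAt (𝓡 d) p).target)
    (hbound : ∀ x ∈ (extChartAt (𝓡 d) p).symm '' closedBall (extChartAt (𝓡 d) p p) r,
      ‖tangentCoordChange (𝓡 d) x p x (X x)‖ ≤ C)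
    {t₁ m : ℝ}
    (hK : MapsTo γ (Icc t₁ m)
      ((extChartAt (𝓡 d) p).symm '' closedBall (extChartAt (𝓡 d) p p) r))
    {s u : ℝ} (hs : t₁ ≤ s) (hsu : s ≤ u) (hu : u ≤ m) :
    ‖extChartAt (𝓡 d) p (γ u) - extChartAt (𝓡 d) p (γ s)‖ ≤ C * (u - s) := by
  have key := norm_image_sub_le_of_norm_deriv_le_segment'
    (f := (extChartAt (𝓡 d) p) ∘ γ)
    (f' := fun w => tangentCoordChange (𝓡 d) (γ w) p (γ w) (X (γ w)))
    (a := s) (b := u) (C := C)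
    (fun w hw => by
      have hwK : γ w ∈ _ := hK ⟨le_trans hs hw.1, le_trans hw.2 hu⟩
      exact (aux_hasDerivAt hγ p ((aux_memK hball).1 hwK).1).hasDerivWithinAt)
    (fun w hw => hbound _ (hK ⟨le_trans hs hw.1, le_trans (le_of_lt hw.2) hu⟩))
  simpa using key u (right_mem_Icc.2 hsu)

lemma aux_decrease {g h : M → ℝ}
    (hder : ∀ t : ℝ, HasDerivAt (fun s => h (γ s)) (g (γ t)) t)
    {δ a b : ℝ} (hab : a ≤ b) (hg : ∀ u ∈ Icc a b, g (γ u) ≤ -δ) :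
    h (γ b) + δ * (b - a) ≤ h (γ a) := by
  set F : ℝ → ℝ := fun u => h (γ u) + δ * u with hF
  have hFd : ∀ u, HasDerivAt F (g (γ u) + δ) u := by
    intro u
    have h2 : HasDerivAt (fun w : ℝ => δ * w) δ u := by
      simpa using (hasDerivAt_id u).const_mul δ
    exact (hder u).add h2
  have hanti : AntitoneOn F (Icc a b) := by
    apply antitoneOn_of_deriv_nonpos (convex_Icc a b)
    · exact (Differentiable.continuous fun u => (hFd u).differentiableAt).continuousOn
    · exact fun x _ => (hFd x).differentiableAt.differentiableWithinAt
    · intro x hx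
      rw [interior_Icc] at hx
      rw [(hFd x).deriv]
      have := hg x (Ioo_subset_Icc_self hx)
      linarith
  have := hanti (left_mem_Icc.2 hab) (right_mem_Icc.2 hab) hab
  simp only [hF] at this
  linarith

lemma aux_main (hXc : Continuous fun x => (⟨x, X x⟩ : TangentBundle (𝓡 d) M))
    (hiso : ∀ x : M, X x = 0 → ∃ U : Set M, IsOpen U ∧ x ∈ U ∧
      ∀ y ∈ U, X y = 0 → y = x)
    {h : M → ℝ} (hh : ContMDiff (𝓡 d) 𝓘(ℝ, ℝ) (⊤ : ℕ∞) h)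
    (hlyap : ∀ x : M, X x ≠ 0 → (show ℝ from mfderiv (𝓡 d) 𝓘(ℝ, ℝ) h x (X x)) < 0)
    (hγ : IsMIntegralCurve γ X) :
    ∃ p : M, Tendsto γ atTop (nhds p) ∧ X p = 0 := by
  set g : M → ℝ := fun x => mfderiv (𝓡 d) 𝓘(ℝ, ℝ) h x (X x) with hgdef
  have hgc : Continuous g := by
    have h1 : Continuous (tangentMap (𝓡 d) 𝓘(ℝ, ℝ) h) := hh.continuous_tangentMap (by simp)
    have h2 := ((tangentBundleModelSpaceHomeomorph 𝓘(ℝ, ℝ)).continuous.comp (h1.comp hXc))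
    exact continuous_snd.comp h2
  have hg0 : ∀ x : M, X x = 0 → g x = 0 := by
    intro x hx
    show mfderiv (𝓡 d) 𝓘(ℝ, ℝ) h x (X x) = 0
    rw [hx]
    exact (mfderiv (𝓡 d) 𝓘(ℝ, ℝ) h x).map_zero
  have hgle : ∀ x : M, g x ≤ 0 := by
    intro x
    by_cases hx : X x = 0
    · exact le_of_eq (hg0 x hx)
    · exact le_of_lt (hlyap x hx)
  have hder : ∀ t : ℝ, HasDerivAt (fun s => h (γ s)) (g (γ t)) t := by
    intro t
    have h1 : MDifferentiableAt (𝓡 d) 𝓘(ℝ, ℝ) h (γ t) := hh.mdifferentiableAt (by simp)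
    have h2 := h1.hasMFDerivAt.comp t (hγ t)
    rw [hasMFDerivAt_iff_hasFDerivAt] at h2
    have h3 : HasDerivAt (fun s => h (γ s)) _ t := HasFDerivAt.hasDerivAt (𝕜 := ℝ) (F := ℝ) h2
    have h4 : ((mfderiv (𝓡 d) 𝓘(ℝ, ℝ) h (γ t)).comp
        (ContinuousLinearMap.smulRight (1 : ℝ →L[ℝ] ℝ) (X (γ t)))) 1 = g (γ t) := by
      simp [hgdef]
    convert h3 using 1
    exact h4.symm
  have hanti : Antitone fun t => h (γ t) :=
    antitone_of_deriv_nonpos (fun t => (hder t).differentiableAt)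
      (fun t => by rw [(hder t).deriv]; exact hgle _)
  have hbdd : BddBelow (range fun t => h (γ t)) := by
    apply BddBelow.mono (range_comp_subset_range γ h)
    exact (isCompact_range hh.continuous).bddBelow
  set c : ℝ := ⨅ t : ℝ, h (γ t) with hcdef
  have hc : Tendsto (fun t => h (γ t)) atTop (nhds c) := tendsto_atTop_ciInf hanti hbdd
  have hcle : ∀ t : ℝ, c ≤ h (γ t) := fun t => ciInf_le hbdd t
  -- cluster point
  obtain ⟨p, hp⟩ := exists_clusterPt_of_compactSpace (Filter.map γ atTop)
  have hp' : MapClusterPt p atTop γ := hp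
  have hfreq : ∀ s ∈ nhds p, ∃ᶠ t in atTop, γ t ∈ s := mapClusterPt_iff_frequently.1 hp'
  -- chart radius chooser
  have key : ∀ W : Set M, IsOpen W → p ∈ W → ∃ r > 0,
      closedBall (extChartAt (𝓡 d) p p) r ⊆ (extChartAt (𝓡 d) p).target ∧
      (extChartAt (𝓡 d) p).symm '' closedBall (extChartAt (𝓡 d) p p) r ⊆ W := by
    intro W hW hpW
    have h1 : (extChartAt (𝓡 d) p).target ∈ nhds (extChartAt (𝓡 d) p p) :=
      extChartAt_target_mem_nhds p
    have h2 : (extChartAt (𝓡 d) p).symm ⁻¹' W ∈ nhds (extChartAt (𝓡 d) p p) := by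
      apply (continuousAt_extChartAt_symm p).preimage_mem_nhds
      rw [extChartAt_to_inv]
      exact hW.mem_nhds hpW
    obtain ⟨r, hr, hrsub⟩ := Metric.nhds_basis_closedBall.mem_iff.1 (inter_mem h1 h2)
    refine ⟨r, hr, fun y hy => (hrsub hy).1, ?_⟩
    rintro x ⟨y, hy, rfl⟩
    exact (hrsub hy).2
  -- bound chooser
  have hboundC : ∀ r : ℝ,
      closedBall (extChartAt (𝓡 d) p p) r ⊆ (extChartAt (𝓡 d) p).target →
      ∃ C > 0, ∀ x ∈ (extChartAt (𝓡 d) p).symm '' closedBall (extChartAt (𝓡 d) p p) r,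
        ‖tangentCoordChange (𝓡 d) x p x (X x)‖ ≤ C := by
    intro r hball
    have hφ : ContinuousOn (fun x => tangentCoordChange (𝓡 d) x p x (X x))
        (extChartAt (𝓡 d) p).source := by
      have h1 := (trivializationAt (EuclideanSpace ℝ (Fin d)) (TangentSpace (𝓡 d)) p).continuousOn
      have h2 : ContinuousOn
          (fun x : M => trivializationAt (EuclideanSpace ℝ (Fin d)) (TangentSpace (𝓡 d)) p
            ⟨x, X x⟩) (chartAt (EuclideanSpace ℝ (Fin d)) p).source := by
        apply h1.comp hXc.continuousOn
        intro x hx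
        simpa using hx
      have h3 := continuous_snd.comp_continuousOn h2
      rw [extChartAt_source]
      exact h3
    have hKsrc : (extChartAt (𝓡 d) p).symm '' closedBall (extChartAt (𝓡 d) p p) r ⊆
        (extChartAt (𝓡 d) p).source := fun x hx => ((aux_memK hball).1 hx).1
    obtain ⟨C, hC⟩ := (aux_K_compact hball).exists_bound_of_continuousOn (hφ.mono hKsrc)
    exact ⟨max C 1, lt_of_lt_of_le one_pos (le_max_right _ _),
      fun x hx => le_trans (hC x hx) (le_max_left _ _)⟩
  -- the cluster point is a zero
  have hzero : X p = 0 := by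
    by_contra hXp
    have hgp : g p < 0 := hlyap p hXp
    have hWopen : IsOpen {x : M | g x < g p / 2} := isOpen_Iio.preimage hgc
    have hpW : p ∈ {x : M | g x < g p / 2} := by
      show g p < g p / 2
      linarith
    obtain ⟨r, hr, hball, hKW⟩ := key _ hWopen hpW
    obtain ⟨C, hC, hbnd⟩ := hboundC r hball
    set δ : ℝ := -(g p) / 2 with hδdef
    have hδ : 0 < δ := by simp only [hδdef]; linarith
    set τ : ℝ := r / (8 * C) with hτdef
    have hτ : 0 < τ := div_pos hr (by linarith)
    have hCτ : C * τ = r / 8 := by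
      rw [hτdef]
      field_simp
    -- choose entry time
    have hev : ∀ᶠ t in atTop, h (γ t) < c + δ * τ :=
      hc.eventually_lt_const (by nlinarith)
    have hKin : IsOpen ((extChartAt (𝓡 d) p).source ∩
        (extChartAt (𝓡 d) p) ⁻¹' ball (extChartAt (𝓡 d) p p) (r / 2)) :=
      (continuousOn_extChartAt p).isOpen_inter_preimage (isOpen_extChartAt_source p) isOpen_ball
    have hpKin : p ∈ (extChartAt (𝓡 d) p).source ∩
        (extChartAt (𝓡 d) p) ⁻¹' ball (extChartAt (𝓡 d) p p) (r / 2) :=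
      ⟨mem_extChartAt_source p, by simp [hr, half_pos hr]⟩
    have hfr := hfreq _ (hKin.mem_nhds hpKin)
    obtain ⟨t₁, ht₁Kin, ht₁h⟩ := (hfr.and_eventually hev).exists
    have hd₁ : dist (extChartAt (𝓡 d) p (γ t₁)) (extChartAt (𝓡 d) p p) < r / 2 := ht₁Kin.2
    obtain ⟨m, hmIcc, hmK, hmd⟩ := aux_crossing hγ p hr hball
      (by linarith : t₁ ≤ t₁ + τ) ht₁Kin.1 (lt_trans hd₁ (by linarith))
    rcases hmd with hmeq | hmdist
    · -- stayed inside: h decreases by δ * τ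
      subst hmeq
      have hg' : ∀ u ∈ Icc t₁ (t₁ + τ), g (γ u) ≤ -δ := by
        intro u hu
        have := hKW (hmK hu)
        show g (γ u) ≤ -δ
        simp only [mem_setOf_eq] at this
        rw [hδdef]
        linarith
      have := aux_decrease hder (by linarith : t₁ ≤ t₁ + τ) hg'
      have h5 : h (γ (t₁ + τ)) < c := by
        have h6 : t₁ + τ - t₁ = τ := by ring
        rw [h6] at this
        linarith
      exact absurd (hcle (t₁ + τ)) (not_le.2 h5)
    · -- hit the sphere too fast
      have hsp := aux_speed hγ p hball hbnd hmK (le_refl t₁) hmIcc.1 (le_refl m)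
      have h7 : r / 2 < ‖extChartAt (𝓡 d) p (γ m) - extChartAt (𝓡 d) p (γ t₁)‖ := by
        have := dist_triangle (extChartAt (𝓡 d) p (γ m)) (extChartAt (𝓡 d) p (γ t₁))
          (extChartAt (𝓡 d) p p)
        simp only [dist_eq_norm] at this hmdist hd₁
        linarith [hmdist, hd₁]
      have h8 : C * (m - t₁) ≤ C * τ := by
        apply mul_le_mul_of_nonneg_left _ (le_of_lt hC)
        linarith [hmIcc.2]
      rw [hCτ] at h8
      linarith
  -- convergence
  refine ⟨p, ?_, hzero⟩
  obtain ⟨U, hUopen, hpU, hUuniq⟩ := hiso p hzero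
  rw [_root_.tendsto_nhds]
  intro N hNopen hpN
  obtain ⟨r, hr, hball, hKsub⟩ := key (N ∩ U) (hNopen.inter hUopen) ⟨hpN, hpU⟩
  obtain ⟨C, hC, hbnd⟩ := hboundC r hball
  -- the annulus
  set A : Set M := (extChartAt (𝓡 d) p).symm ''
    (closedBall (extChartAt (𝓡 d) p p) r ∩ {y | r / 2 ≤ dist y (extChartAt (𝓡 d) p p)})
    with hAdef
  have hAcomp : IsCompact A := by
    apply IsCompact.image_of_continuousOn
    · exact (isCompact_closedBall _ _).inter_right
        (isClosed_le continuous_const (continuous_id.dist continuous_const))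
    · exact (continuousOn_extChartAt_symm p).mono
        (subset_trans inter_subset_left hball)
  have hmemA : ∀ x : M, x ∈ A →
      x ∈ (extChartAt (𝓡 d) p).symm '' closedBall (extChartAt (𝓡 d) p p) r ∧
      r / 2 ≤ dist (extChartAt (𝓡 d) p x) (extChartAt (𝓡 d) p p) := by
    rintro x ⟨y, ⟨hy1, hy2⟩, rfl⟩
    refine ⟨mem_image_of_mem _ hy1, ?_⟩
    rw [(extChartAt (𝓡 d) p).right_inv (hball hy1)]
    exact hy2
  have hmemA' : ∀ x : M,
      x ∈ (extChartAt (𝓡 d) p).symm '' closedBall (extChartAt (𝓡 d) p p) r →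
      r / 2 ≤ dist (extChartAt (𝓡 d) p x) (extChartAt (𝓡 d) p p) → x ∈ A := by
    intro x hx hd
    obtain ⟨hsrc, hle⟩ := (aux_memK hball).1 hx
    exact ⟨extChartAt (𝓡 d) p x, ⟨by simpa using hle, hd⟩, (extChartAt (𝓡 d) p).left_inv hsrc⟩
  have hAneg : ∀ x ∈ A, g x < 0 := by
    intro x hx
    obtain ⟨hxK, hxd⟩ := hmemA x hx
    have hxU : x ∈ U := (hKsub hxK).2
    apply hlyap
    intro hx0
    have : x = p := hUuniq x hxU hx0
    subst this
    simp at hxd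
    linarith
  obtain ⟨δ, hδ, hAδ⟩ : ∃ δ > 0, ∀ x ∈ A, g x ≤ -δ := by
    rcases A.eq_empty_or_nonempty with hA | hA
    · exact ⟨1, one_pos, by simp [hA]⟩
    · obtain ⟨x₀, hx₀, hmax⟩ := hAcomp.exists_isMaxOn hA hgc.continuousOn
      refine ⟨-(g x₀), by linarith [hAneg x₀ hx₀], fun x hx => ?_⟩
      have := hmax hx
      simp only [neg_neg]
      exact this
  set τ : ℝ := r / (4 * C) with hτdef
  have hτ : 0 < τ := div_pos hr (by linarith)
  have hCτ : C * τ = r / 4 := by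
    rw [hτdef]
    field_simp
  -- suppose not eventually in N
  by_contra hnot
  have hnotO : ∃ᶠ t in atTop, γ t ∉ N := not_eventually.1 hnot
  have hev : ∀ᶠ t in atTop, h (γ t) < c + δ * τ :=
    hc.eventually_lt_const (by nlinarith)
  have hKin : IsOpen ((extChartAt (𝓡 d) p).source ∩
      (extChartAt (𝓡 d) p) ⁻¹' ball (extChartAt (𝓡 d) p p) (r / 2)) :=
    (continuousOn_extChartAt p).isOpen_inter_preimage (isOpen_extChartAt_source p) isOpen_ball
  have hpKin : p ∈ (extChartAt (𝓡 d) p).source ∩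
      (extChartAt (𝓡 d) p) ⁻¹' ball (extChartAt (𝓡 d) p p) (r / 2) :=
    ⟨mem_extChartAt_source p, by simp [half_pos hr]⟩
  have hfr := hfreq _ (hKin.mem_nhds hpKin)
  obtain ⟨t₁, ht₁Kin, ht₁h⟩ := (hfr.and_eventually hev).exists
  have hd₁ : dist (extChartAt (𝓡 d) p (γ t₁)) (extChartAt (𝓡 d) p p) < r / 2 := ht₁Kin.2
  obtain ⟨t₂, ht₂N, ht₂ge⟩ := (hnotO.and_eventually (eventually_ge_atTop t₁)).exists
  obtain ⟨m, hmIcc, hmK, hmd⟩ := aux_crossing hγ p hr hball ht₂ge ht₁Kin.1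
    (lt_trans hd₁ (by linarith))
  have hmdist : dist (extChartAt (𝓡 d) p (γ m)) (extChartAt (𝓡 d) p p) = r := by
    rcases hmd with hmeq | hmdist
    · subst hmeq
      have hK2 := hmK ⟨hmIcc.1, le_refl _⟩
      obtain ⟨hsrc, hle⟩ := (aux_memK hball).1 hK2
      rcases lt_or_eq_of_le hle with hlt | heq
      · exfalso
        apply ht₂N
        apply (hKsub hK2).1
      · exact heq
    · exact hmdist
  -- time estimate
  have hsp := aux_speed hγ p hball hbnd hmK (le_refl t₁) hmIcc.1 (le_refl m)
  have h7 : r / 2 < ‖extChartAt (𝓡 d) p (γ m) - extChartAt (𝓡 d) p (γ t₁)‖ := by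
    have := dist_triangle (extChartAt (𝓡 d) p (γ m)) (extChartAt (𝓡 d) p (γ t₁))
      (extChartAt (𝓡 d) p p)
    simp only [dist_eq_norm] at this hmdist hd₁
    linarith
  have hmt₁ : r / (2 * C) < m - t₁ := by
    rw [div_lt_iff₀ (by linarith : (0:ℝ) < 2 * C)]
    nlinarith
  have hττ : τ < m - t₁ := by
    have : τ < r / (2 * C) := by
      rw [hτdef, div_lt_div_iff₀ (by linarith) (by linarith)]
      nlinarith
    linarith
  -- on [m - τ, m] the curve is in the annulus
  have hann : ∀ s ∈ Icc (m - τ) m, γ s ∈ A := by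
    intro s hs
    have hsIcc : s ∈ Icc t₁ m := ⟨by linarith [hs.1], hs.2⟩
    have hsK := hmK hsIcc
    apply hmemA' _ hsK
    have hsp2 := aux_speed hγ p hball hbnd hmK hsIcc.1 hs.2 (le_refl m)
    have h9 : C * (m - s) ≤ r / 4 := by
      rw [← hCτ]
      apply mul_le_mul_of_nonneg_left _ (le_of_lt hC)
      linarith [hs.1]
    have := dist_triangle (extChartAt (𝓡 d) p (γ m)) (extChartAt (𝓡 d) p (γ s))
      (extChartAt (𝓡 d) p p)
    simp only [dist_eq_norm] at this hmdist
    have h10 : ‖extChartAt (𝓡 d) p (γ m) - extChartAt (𝓡 d) p (γ s)‖ ≤ r / 4 :=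
      le_trans hsp2 h9
    rw [dist_eq_norm]
    linarith
  have hdec := aux_decrease hder (by linarith : m - τ ≤ m)
    (fun u hu => hAδ _ (hann u hu))
  have h11 : m - (m - τ) = τ := by ring
  rw [h11] at hdec
  have h12 : h (γ (m - τ)) ≤ h (γ t₁) := hanti (by linarith)
  have h13 : h (γ m) < c := by linarith
  exact absurd (hcle m) (not_le.2 h13)

end Aux

/-- On a closed manifold, every integral curve of a gradient-like vector field (with
isolated zeros and a strict Lyapunov function `h`) converges to a zero of the vector
field as `t → +∞` and as `t → -∞`. -/
theorem stmt_3 {d : ℕ} {M : Type*} [TopologicalSpace M] [T2Space M]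
    [SecondCountableTopology M] [CompactSpace M]
    [ChartedSpace (EuclideanSpace ℝ (Fin d)) M]
    [IsManifold (𝓡 d) (⊤ : ℕ∞) M]
    (X : (x : M) → TangentSpace (𝓡 d) x)
    (hX : ContMDiff (𝓡 d) (𝓡 d).tangent (⊤ : ℕ∞)
      (fun x => (⟨x, X x⟩ : TangentBundle (𝓡 d) M)))
    (hiso : ∀ x : M, X x = 0 → ∃ U : Set M, IsOpen U ∧ x ∈ U ∧
      ∀ y ∈ U, X y = 0 → y = x)
    (h : M → ℝ) (hh : ContMDiff (𝓡 d) 𝓘(ℝ, ℝ) (⊤ : ℕ∞) h)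
    (hlyap : ∀ x : M, X x ≠ 0 → (show ℝ from mfderiv (𝓡 d) 𝓘(ℝ, ℝ) h x (X x)) < 0)
    (γ : ℝ → M) (hγ : IsMIntegralCurve γ X) :
    (∃ p : M, Filter.Tendsto γ Filter.atTop (nhds p) ∧ X p = 0) ∧
    (∃ q : M, Filter.Tendsto γ Filter.atBot (nhds q) ∧ X q = 0) := by
  constructor
  · exact aux_main hX.continuous hiso hh hlyap hγ
  · set X' : (x : M) → TangentSpace (𝓡 d) x := fun x => -X x with hX'def
    have hγ' : IsMIntegralCurve (γ ∘ (· * (-1))) X' := by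
      have h1 := hγ.comp_mul (-1)
      have h0 : ((-1 : ℝ) • X) = X' := by
        funext x
        exact neg_one_smul ℝ (X x)
      rwa [h0] at h1
    have hX'c : Continuous fun x => (⟨x, X' x⟩ : TangentBundle (𝓡 d) M) := by
      let s : Cₛ^(⊤ : ℕ∞)⟮𝓡 d; EuclideanSpace ℝ (Fin d), TangentSpace (𝓡 d)⟯ := ⟨X, hX⟩
      exact (-s).contMDiff.continuous
    have hiso' : ∀ x : M, X' x = 0 → ∃ U : Set M, IsOpen U ∧ x ∈ U ∧
        ∀ y ∈ U, X' y = 0 → y = x := by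
      intro x hx
      obtain ⟨U, hU, hxU, huniq⟩ := hiso x (by rwa [hX'def, neg_eq_zero] at hx)
      exact ⟨U, hU, hxU, fun y hy hy0 => huniq y hy (neg_eq_zero.1 hy0)⟩
    have hh' : ContMDiff (𝓡 d) 𝓘(ℝ, ℝ) (⊤ : ℕ∞) (-h) := hh.neg
    have hlyap' : ∀ x : M, X' x ≠ 0 →
        (show ℝ from mfderiv (𝓡 d) 𝓘(ℝ, ℝ) (-h) x (X' x)) < 0 := by
      intro x hx
      have hx0 : X x ≠ 0 := by
        intro h0
        apply hx
        show -X x = 0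
        rw [h0, neg_zero]
      have h1 := hlyap x hx0
      convert h1 using 1
      show ((mfderiv (𝓡 d) 𝓘(ℝ, ℝ) (-h) x) (-X x) : ℝ) = ((mfderiv (𝓡 d) 𝓘(ℝ, ℝ) h x) (X x) : ℝ)
      rw [mfderiv_neg]
      exact neg_neg_trick (F := EuclideanSpace ℝ (Fin d)) (mfderiv (𝓡 d) 𝓘(ℝ, ℝ) h x) (X x)
    obtain ⟨q, hq, hq0⟩ := aux_main hX'c hiso' hh' hlyap' hγ'
    refine ⟨q, ?_, neg_eq_zero.1 hq0⟩
    have h3 := hq.comp tendsto_neg_atBot_atTop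
    have h4 : ((γ ∘ (· * (-1))) ∘ (fun t : ℝ => -t)) = γ := by
      funext t
      show γ (-t * -1) = γ t
      norm_num
    rwa [h4] at h3
end

section
/- Let 0 ≤ ℓ ≤ n and ε > 0; write y = (y⁺, y⁻) ∈ ℝ^{n−ℓ} × ℝ^ℓ and h(y) = ½(‖y⁺‖² − ‖y⁻‖²); let S⁺ = {(y⁺, 0) : ‖y⁺‖² = 2ε} and S⁻ = {(0, y⁻) : ‖y⁻‖² = 2ε}. Define Θ(y⁺, y⁻, s) = (x⁺, x⁻) with x⁺ = (1−s²)^{−1/2}(y⁺, s y⁻) and x⁻ = (1−s²)^{−1/2}(s y⁺, y⁻). Then: Θ is smooth on {(y⁺, y⁻, s) : s² < 1}; the restriction θ of Θ to S⁺ × S⁻ × [0, 1/2) (i.e. to ‖y⁺‖² = 2ε, ‖y⁻‖² = 2ε, 0 ≤ s < 1/2) is injective; θ(p, q, 0) = (p, q) for p ∈ S⁺, q ∈ S⁻; for all such (y⁺, y⁻, s) one has h(x⁺) = ε and h(x⁻) = −ε; and for 0 < s < 1/2, x⁻ = Φ_t(x⁺) with t = −log s > 0, where Φ_t(u⁺,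 u⁻) = (e^{−t} u⁺, e^{t} u⁻) is the flow of the negative gradient vector field −grad h = (−y⁺, y⁻). -/
set_option maxHeartbeats 1000000


/-- The collar map `θ(y⁺, y⁻, s) = ((1-s²)^{-1/2}(y⁺, s y⁻), (1-s²)^{-1/2}(s y⁺, y⁻))` of the
boundary stratum `S⁺ × S⁻` inside the space `P` of pairs of points on the level sets
`{h = ε}`, `{h = -ε}` joined by a (possibly broken) trajectory of `-grad h`. -/
theorem stmt_7 (n ℓ : ℕ) (hℓn : ℓ ≤ n) (ε : ℝ) (hε : 0 < ε)
    (h : EuclideanSpace ℝ (Fin (n - ℓ)) × EuclideanSpace ℝ (Fin ℓ) → ℝ)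
    (hdef : ∀ y, h y = (‖y.1‖ ^ 2 - ‖y.2‖ ^ 2) / 2)
    (Θ : EuclideanSpace ℝ (Fin (n - ℓ)) × EuclideanSpace ℝ (Fin ℓ) × ℝ →
      (EuclideanSpace ℝ (Fin (n - ℓ)) × EuclideanSpace ℝ (Fin ℓ)) ×
      (EuclideanSpace ℝ (Fin (n - ℓ)) × EuclideanSpace ℝ (Fin ℓ)))
    (hΘ : ∀ (yp : EuclideanSpace ℝ (Fin (n - ℓ))) (ym : EuclideanSpace ℝ (Fin ℓ)) (s : ℝ),
      Θ (yp, ym, s) =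
        (((Real.sqrt (1 - s ^ 2))⁻¹ • yp, ((Real.sqrt (1 - s ^ 2))⁻¹ * s) • ym),
         (((Real.sqrt (1 - s ^ 2))⁻¹ * s) • yp, (Real.sqrt (1 - s ^ 2))⁻¹ • ym)))
    (Φ : ℝ → EuclideanSpace ℝ (Fin (n - ℓ)) × EuclideanSpace ℝ (Fin ℓ) →
      EuclideanSpace ℝ (Fin (n - ℓ)) × EuclideanSpace ℝ (Fin ℓ))
    (hΦ : ∀ t u, Φ t u = (Real.exp (-t) • u.1, Real.exp t • u.2)) :
    ContDiffOn ℝ (⊤ : ℕ∞) Θ {p | p.2.2 ^ 2 < 1} ∧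
    Set.InjOn Θ {p | ‖p.1‖ ^ 2 = 2 * ε ∧ ‖p.2.1‖ ^ 2 = 2 * ε ∧ 0 ≤ p.2.2 ∧ p.2.2 < 1 / 2} ∧
    (∀ yp ym, Θ (yp, ym, 0) = ((yp, 0), (0, ym))) ∧
    (∀ yp ym (s : ℝ), ‖yp‖ ^ 2 = 2 * ε → ‖ym‖ ^ 2 = 2 * ε → 0 ≤ s → s < 1 / 2 →
      h (Θ (yp, ym, s)).1 = ε ∧ h (Θ (yp, ym, s)).2 = -ε) ∧
    (∀ yp ym (s : ℝ), ‖yp‖ ^ 2 = 2 * ε → ‖ym‖ ^ 2 = 2 * ε → 0 < s → s < 1 / 2 →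
      0 < -Real.log s ∧ (Θ (yp, ym, s)).2 = Φ (-Real.log s) (Θ (yp, ym, s)).1) := by
  have hΘ' : ∀ p : EuclideanSpace ℝ (Fin (n - ℓ)) × EuclideanSpace ℝ (Fin ℓ) × ℝ, Θ p =
      (((Real.sqrt (1 - p.2.2 ^ 2))⁻¹ • p.1, ((Real.sqrt (1 - p.2.2 ^ 2))⁻¹ * p.2.2) • p.2.1),
       (((Real.sqrt (1 - p.2.2 ^ 2))⁻¹ * p.2.2) • p.1, (Real.sqrt (1 - p.2.2 ^ 2))⁻¹ • p.2.1)) :=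
    fun p => hΘ p.1 p.2.1 p.2.2
  refine ⟨?_, ?_, ?_, ?_, ?_⟩
  · -- smoothness
    have hc : ContDiffOn ℝ (⊤ : ℕ∞) (fun p : EuclideanSpace ℝ (Fin (n - ℓ)) × EuclideanSpace ℝ (Fin ℓ) × ℝ => (Real.sqrt (1 - p.2.2 ^ 2))⁻¹)
        {p | p.2.2 ^ 2 < 1} := by
      intro p hp
      have hp' : p.2.2 ^ 2 < 1 := hp
      have h1 : (0 : ℝ) < 1 - p.2.2 ^ 2 := by linarith
      have hinner : ContDiffAt ℝ (⊤ : ℕ∞) (fun p : EuclideanSpace ℝ (Fin (n - ℓ)) × EuclideanSpace ℝ (Fin ℓ) × ℝ => 1 - p.2.2 ^ 2) p :=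
        (contDiffAt_const.sub ((contDiffAt_snd.snd).pow 2))
      have hsq : ContDiffAt ℝ (⊤ : ℕ∞) (fun p : EuclideanSpace ℝ (Fin (n - ℓ)) × EuclideanSpace ℝ (Fin ℓ) × ℝ => Real.sqrt (1 - p.2.2 ^ 2)) p :=
        (Real.contDiffAt_sqrt h1.ne').comp p hinner
      exact (hsq.inv (Real.sqrt_ne_zero'.mpr h1)).contDiffWithinAt
    have hfst : ContDiffOn ℝ (⊤ : ℕ∞) (fun p : EuclideanSpace ℝ (Fin (n - ℓ)) × EuclideanSpace ℝ (Fin ℓ) × ℝ => p.1) {p | p.2.2 ^ 2 < 1} :=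
      contDiffOn_fst
    have hsnd1 : ContDiffOn ℝ (⊤ : ℕ∞) (fun p : EuclideanSpace ℝ (Fin (n - ℓ)) × EuclideanSpace ℝ (Fin ℓ) × ℝ => p.2.1) {p | p.2.2 ^ 2 < 1} :=
      (contDiff_fst.comp contDiff_snd).contDiffOn
    have hsnd2 : ContDiffOn ℝ (⊤ : ℕ∞) (fun p : EuclideanSpace ℝ (Fin (n - ℓ)) × EuclideanSpace ℝ (Fin ℓ) × ℝ => p.2.2) {p | p.2.2 ^ 2 < 1} :=
      (contDiff_snd.comp contDiff_snd).contDiffOn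
    have hcs := hc.mul hsnd2
    exact (((hc.smul hfst).prodMk (hcs.smul hsnd1)).prodMk
      ((hcs.smul hfst).prodMk (hc.smul hsnd1))).congr fun p _ => hΘ' p
  · -- injectivity
    rintro p ⟨hp1, hp2, hp3, hp4⟩ q ⟨hq1, hq2, hq3, hq4⟩ heq
    rw [hΘ' p, hΘ' q] at heq
    set s := p.2.2 with hs
    set t := q.2.2 with ht
    have hsub : (0:ℝ) < 1 - s ^ 2 := by nlinarith [hp3, hp4]
    have htub : (0:ℝ) < 1 - t ^ 2 := by nlinarith [hq3, hq4]
    have has : (0:ℝ) < Real.sqrt (1 - s ^ 2) := Real.sqrt_pos.mpr hsub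
    have hat : (0:ℝ) < Real.sqrt (1 - t ^ 2) := Real.sqrt_pos.mpr htub
    have e1 := congrArg (fun x => x.1.1) heq
    have e4 := congrArg (fun x => x.2.2) heq
    simp only at e1 e4
    -- norms of first components give equality of scalars
    have hnorm := congrArg norm e1
    rw [norm_smul, norm_smul] at hnorm
    have hnp : ‖p.1‖ = Real.sqrt (2*ε) := by
      rw [← Real.sqrt_sq (norm_nonneg p.1), hp1]
    have hnq : ‖q.1‖ = Real.sqrt (2*ε) := by
      rw [← Real.sqrt_sq (norm_nonneg q.1), hq1]
    have hsq2e : (0:ℝ) < Real.sqrt (2*ε) := Real.sqrt_pos.mpr (by linarith)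
    have hscal : (Real.sqrt (1 - s ^ 2))⁻¹ = (Real.sqrt (1 - t ^ 2))⁻¹ := by
      rw [hnp, hnq] at hnorm
      have := mul_right_cancel₀ hsq2e.ne' hnorm
      rwa [Real.norm_eq_abs, Real.norm_eq_abs, abs_of_pos (inv_pos.mpr has),
        abs_of_pos (inv_pos.mpr hat)] at this
    have hsqrt : Real.sqrt (1 - s ^ 2) = Real.sqrt (1 - t ^ 2) := inv_injective hscal
    have hst : s = t := by
      have h2 : 1 - s ^ 2 = 1 - t ^ 2 := by
        have := congrArg (· ^ 2) hsqrt
        simpa [Real.sq_sqrt hsub.le, Real.sq_sqrt htub.le] using this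
      have h3 : s ^ 2 = t ^ 2 := by linarith
      rw [← Real.sqrt_sq hp3, ← Real.sqrt_sq hq3, h3]
    have hp1q1 : p.1 = q.1 := by
      rw [hscal] at e1
      exact smul_right_injective _ (inv_pos.mpr hat).ne' e1
    have hp2q2 : p.2.1 = q.2.1 := by
      rw [hscal] at e4
      exact smul_right_injective _ (inv_pos.mpr hat).ne' e4
    exact Prod.ext hp1q1 (Prod.ext hp2q2 hst)
  · -- s = 0 case
    intro yp ym
    simp [hΘ]
  · -- level sets
    intro yp ym s hyp hym hs0 hs12
    have hsub : (0:ℝ) < 1 - s ^ 2 := by nlinarith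
    have hsq : Real.sqrt (1 - s ^ 2) ^ 2 = 1 - s ^ 2 := Real.sq_sqrt hsub.le
    rw [hΘ]
    constructor <;>
    · rw [hdef]
      simp only [norm_smul, mul_pow, Real.norm_eq_abs, sq_abs]
      rw [hyp, hym, inv_pow, hsq]
      field_simp
      all_goals ring
  · -- flow
    intro yp ym s hyp hym hs0 hs12
    have hlog : Real.log s < 0 := Real.log_neg hs0 (by linarith)
    refine ⟨by linarith, ?_⟩
    rw [hΘ, hΦ]
    simp only [neg_neg, Real.exp_log hs0]
    have hexp : Real.exp (-Real.log s) = s⁻¹ := by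
      rw [Real.exp_neg, Real.exp_log hs0]
    rw [hexp]
    congr 1
    · simp [smul_smul, mul_comm]
    · simp only [smul_smul]
      congr 1
      field_simp
end

section
/- Let 0 ≤ ℓ ≤ n and ε > 0; write y = (y⁺, y⁻) ∈ ℝ^{n−ℓ} × ℝ^ℓ and h(y) = ½(‖y⁺‖² − ‖y⁻‖²). For ‖y⁺‖² = 2ε, ‖y⁻‖² < 2ε, and 0 ≤ s < 1/2, set f(s) = (1 − s²‖y⁻‖²/(2ε))^{−1/2} and define θ((y⁺,0), (0,y⁻), s) = (x⁺, x) with x⁺ = f(s)(y⁺, s y⁻) and x = f(s)(s y⁺, y⁻). Then θ is smooth in (y⁺, y⁻, s) on this domain and injective; θ((y⁺,0),(0,y⁻),0) = ((y⁺,0),(0,y⁻)); h(x⁺) = ε and ‖x‖² < 4ε for all admissible (y⁺, y⁻, s); and for 0 < s < 1/2, x = Φ_t(x⁺) with t = −log s > 0, where Φ_t(u⁺, u⁻) = (e^{−t} u⁺, e^{t} u⁻) is the flow of the negative gradient vector field −grad h = (−y⁺, y⁻). -/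
/-- The collar map `θ((y⁺,0),(0,y⁻),s) = (f(s)(y⁺, s y⁻), f(s)(s y⁺, y⁻))`,
`f(s) = (1 - s²‖y⁻‖²/(2ε))^{-1/2}`, of the boundary stratum `S⁺ × (W⁻₀ ∩ ball)` inside the
space `Q` of pairs `(x⁺, x)` lying on a common (possibly broken) trajectory of `-grad h`. -/
theorem stmt_8 (n ℓ : ℕ) (hℓn : ℓ ≤ n) (ε : ℝ) (hε : 0 < ε)
    (h : EuclideanSpace ℝ (Fin (n - ℓ)) × EuclideanSpace ℝ (Fin ℓ) → ℝ)
    (hdef : ∀ y, h y = (‖y.1‖ ^ 2 - ‖y.2‖ ^ 2) / 2)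
    (f : EuclideanSpace ℝ (Fin ℓ) → ℝ → ℝ)
    (hf : ∀ ym s, f ym s = (Real.sqrt (1 - s ^ 2 * ‖ym‖ ^ 2 / (2 * ε)))⁻¹)
    (θ : EuclideanSpace ℝ (Fin (n - ℓ)) × EuclideanSpace ℝ (Fin ℓ) × ℝ →
      (EuclideanSpace ℝ (Fin (n - ℓ)) × EuclideanSpace ℝ (Fin ℓ)) ×
      (EuclideanSpace ℝ (Fin (n - ℓ)) × EuclideanSpace ℝ (Fin ℓ)))
    (hθ : ∀ (yp : EuclideanSpace ℝ (Fin (n - ℓ))) (ym : EuclideanSpace ℝ (Fin ℓ)) (s : ℝ),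
      θ (yp, ym, s) =
        ((f ym s • yp, (f ym s * s) • ym), ((f ym s * s) • yp, f ym s • ym)))
    (Φ : ℝ → EuclideanSpace ℝ (Fin (n - ℓ)) × EuclideanSpace ℝ (Fin ℓ) →
      EuclideanSpace ℝ (Fin (n - ℓ)) × EuclideanSpace ℝ (Fin ℓ))
    (hΦ : ∀ t u, Φ t u = (Real.exp (-t) • u.1, Real.exp t • u.2)) :
    ContDiffOn ℝ (⊤ : ℕ∞) θ
      {p | ‖p.1‖ ^ 2 = 2 * ε ∧ ‖p.2.1‖ ^ 2 < 2 * ε ∧ 0 ≤ p.2.2 ∧ p.2.2 < 1 / 2} ∧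
    Set.InjOn θ {p | ‖p.1‖ ^ 2 = 2 * ε ∧ ‖p.2.1‖ ^ 2 < 2 * ε ∧ 0 ≤ p.2.2 ∧ p.2.2 < 1 / 2} ∧
    (∀ yp ym, ‖yp‖ ^ 2 = 2 * ε → ‖ym‖ ^ 2 < 2 * ε →
      θ (yp, ym, 0) = ((yp, 0), (0, ym))) ∧
    (∀ yp ym (s : ℝ), ‖yp‖ ^ 2 = 2 * ε → ‖ym‖ ^ 2 < 2 * ε → 0 ≤ s → s < 1 / 2 →
      h (θ (yp, ym, s)).1 = ε ∧
      ‖(θ (yp, ym, s)).2.1‖ ^ 2 + ‖(θ (yp, ym, s)).2.2‖ ^ 2 < 4 * ε) ∧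
    (∀ yp ym (s : ℝ), ‖yp‖ ^ 2 = 2 * ε → ‖ym‖ ^ 2 < 2 * ε → 0 < s → s < 1 / 2 →
      0 < -Real.log s ∧ (θ (yp, ym, s)).2 = Φ (-Real.log s) (θ (yp, ym, s)).1) := by
  have hε2 : (0:ℝ) < 2 * ε := by linarith
  have hg : ∀ (ym : EuclideanSpace ℝ (Fin ℓ)) (s : ℝ), ‖ym‖ ^ 2 < 2 * ε → 0 ≤ s →
      s < 1 / 2 → 0 < 1 - s ^ 2 * ‖ym‖ ^ 2 / (2 * ε) := by
    intro ym s hm hs0 hs1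
    rw [sub_pos, div_lt_one hε2]
    have hs2 : s ^ 2 ≤ 1 / 4 := by nlinarith
    nlinarith [mul_le_mul_of_nonneg_right hs2 (sq_nonneg ‖ym‖), sq_nonneg ‖ym‖]
  have hfpos : ∀ (ym : EuclideanSpace ℝ (Fin ℓ)) (s : ℝ), ‖ym‖ ^ 2 < 2 * ε → 0 ≤ s →
      s < 1 / 2 → 0 < f ym s := by
    intro ym s hm hs0 hs1
    rw [hf]
    exact inv_pos.mpr (Real.sqrt_pos.mpr (hg ym s hm hs0 hs1))
  have hfsq : ∀ (ym : EuclideanSpace ℝ (Fin ℓ)) (s : ℝ), ‖ym‖ ^ 2 < 2 * ε → 0 ≤ s →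
      s < 1 / 2 → (f ym s) ^ 2 = (1 - s ^ 2 * ‖ym‖ ^ 2 / (2 * ε))⁻¹ := by
    intro ym s hm hs0 hs1
    rw [hf, inv_pow, Real.sq_sqrt (hg ym s hm hs0 hs1).le]
  refine ⟨?_, ?_, ?_, ?_, ?_⟩
  · -- smoothness
    have hθeq : θ = fun p => ((f p.2.1 p.2.2 • p.1, (f p.2.1 p.2.2 * p.2.2) • p.2.1),
        ((f p.2.1 p.2.2 * p.2.2) • p.1, f p.2.1 p.2.2 • p.2.1)) := by
      funext p
      obtain ⟨a, b, c⟩ := p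
      exact hθ a b c
    rw [hθeq]
    have hFsm : ContDiffOn ℝ (⊤ : ℕ∞)
        (fun p : EuclideanSpace ℝ (Fin (n - ℓ)) × EuclideanSpace ℝ (Fin ℓ) × ℝ =>
          f p.2.1 p.2.2)
        {p | ‖p.1‖ ^ 2 = 2 * ε ∧ ‖p.2.1‖ ^ 2 < 2 * ε ∧ 0 ≤ p.2.2 ∧ p.2.2 < 1 / 2} := by
      have hGsm : ContDiff ℝ (⊤ : ℕ∞)
          (fun p : EuclideanSpace ℝ (Fin (n - ℓ)) × EuclideanSpace ℝ (Fin ℓ) × ℝ =>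
            1 - p.2.2 ^ 2 * ‖p.2.1‖ ^ 2 / (2 * ε)) := by
        exact contDiff_const.sub
          ((((contDiff_snd.comp contDiff_snd).pow 2).mul
            ((contDiff_norm_sq ℝ).comp (contDiff_fst.comp contDiff_snd))).div_const _)
      have hfeq : (fun p : EuclideanSpace ℝ (Fin (n - ℓ)) × EuclideanSpace ℝ (Fin ℓ) × ℝ =>
          f p.2.1 p.2.2) = fun p =>
            (Real.sqrt (1 - p.2.2 ^ 2 * ‖p.2.1‖ ^ 2 / (2 * ε)))⁻¹ :=
        funext fun p => hf _ _
      rw [hfeq]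
      intro p hp
      obtain ⟨hp1, hp2, hp3, hp4⟩ := hp
      have hgp := hg p.2.1 p.2.2 hp2 hp3 hp4
      exact (((Real.contDiffAt_sqrt hgp.ne').comp p hGsm.contDiffAt).inv
        (Real.sqrt_ne_zero'.mpr hgp)).contDiffWithinAt
    have h1 : ContDiffOn ℝ (⊤ : ℕ∞)
        (fun p : EuclideanSpace ℝ (Fin (n - ℓ)) × EuclideanSpace ℝ (Fin ℓ) × ℝ => p.1)
        {p | ‖p.1‖ ^ 2 = 2 * ε ∧ ‖p.2.1‖ ^ 2 < 2 * ε ∧ 0 ≤ p.2.2 ∧ p.2.2 < 1 / 2} :=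
      contDiff_fst.contDiffOn
    have h21 : ContDiffOn ℝ (⊤ : ℕ∞)
        (fun p : EuclideanSpace ℝ (Fin (n - ℓ)) × EuclideanSpace ℝ (Fin ℓ) × ℝ => p.2.1)
        {p | ‖p.1‖ ^ 2 = 2 * ε ∧ ‖p.2.1‖ ^ 2 < 2 * ε ∧ 0 ≤ p.2.2 ∧ p.2.2 < 1 / 2} :=
      (contDiff_fst.comp contDiff_snd).contDiffOn
    have h22 : ContDiffOn ℝ (⊤ : ℕ∞)
        (fun p : EuclideanSpace ℝ (Fin (n - ℓ)) × EuclideanSpace ℝ (Fin ℓ) × ℝ => p.2.2)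
        {p | ‖p.1‖ ^ 2 = 2 * ε ∧ ‖p.2.1‖ ^ 2 < 2 * ε ∧ 0 ≤ p.2.2 ∧ p.2.2 < 1 / 2} :=
      (contDiff_snd.comp contDiff_snd).contDiffOn
    exact ((hFsm.smul h1).prodMk ((hFsm.mul h22).smul h21)).prodMk
      (((hFsm.mul h22).smul h1).prodMk (hFsm.smul h21))
  · -- injectivity
    rintro ⟨a, b, c⟩ ⟨ha, hb, hc0, hc1⟩ ⟨a', b', c'⟩ ⟨ha', hb', hc0', hc1'⟩ heq
    simp only [Set.mem_setOf_eq] at ha hb hc0 hc1 ha' hb' hc0' hc1'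
    rw [hθ, hθ] at heq
    simp only [Prod.mk.injEq] at heq
    obtain ⟨⟨e1, e2⟩, e3, e4⟩ := heq
    have hfb := hfpos b c hb hc0 hc1
    have hfb' := hfpos b' c' hb' hc0' hc1'
    have hane : ‖a‖ ≠ 0 := by
      intro h0
      rw [h0] at ha
      nlinarith
    have haa : ‖a‖ = ‖a'‖ := by
      have h1 : ‖a‖ = Real.sqrt (2 * ε) := by rw [← ha, Real.sqrt_sq (norm_nonneg a)]
      have h2 : ‖a'‖ = Real.sqrt (2 * ε) := by rw [← ha', Real.sqrt_sq (norm_nonneg a')]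
      rw [h1, h2]
    have hnorm : f b c * ‖a‖ = f b' c' * ‖a'‖ := by
      have := congrArg norm e1
      rwa [norm_smul, norm_smul, Real.norm_eq_abs, Real.norm_eq_abs, abs_of_pos hfb,
        abs_of_pos hfb'] at this
    have hff : f b c = f b' c' := by
      apply mul_right_cancel₀ hane
      rw [hnorm, haa]
    rw [← hff] at e1 e3 e4
    have haeq : a = a' := smul_right_injective _ hfb.ne' e1
    have hbeq : b = b' := smul_right_injective _ hfb.ne' e4
    have hce : f b c * c = f b c * c' := by
      rw [haeq] at e3
      have hane' : a' ≠ 0 := by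
        intro h0
        rw [haeq, h0, norm_zero] at hane
        exact hane rfl
      exact smul_left_injective ℝ hane' e3
    have hceq : c = c' := mul_left_cancel₀ hfb.ne' hce
    rw [haeq, hbeq, hceq]
  · -- s = 0
    intro yp ym hyp hym
    have hf0 : f ym 0 = 1 := by
      rw [hf]
      norm_num
    rw [hθ, hf0]
    norm_num
  · -- h = ε and norm bound
    intro yp ym s hyp hym hs0 hs1
    have hfp := hfpos ym s hym hs0 hs1
    have hf2 := hfsq ym s hym hs0 hs1
    have hgp := hg ym s hym hs0 hs1
    have hlt : s ^ 2 * ‖ym‖ ^ 2 < 2 * ε := by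
      have h' := hgp
      rw [sub_pos, div_lt_one hε2] at h'
      exact h'
    have hgi2 : (f ym s) ^ 2 * (2 * ε - s ^ 2 * ‖ym‖ ^ 2) = 2 * ε := by
      rw [hf2]
      have e : 1 - s ^ 2 * ‖ym‖ ^ 2 / (2 * ε) =
          (2 * ε - s ^ 2 * ‖ym‖ ^ 2) / (2 * ε) := by
        field_simp
      rw [e, inv_div, div_mul_cancel₀ _ (sub_ne_zero.mpr hlt.ne')]
    constructor
    · rw [hθ]
      rw [hdef]
      simp only [norm_smul, Real.norm_eq_abs, abs_of_pos hfp,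
        abs_of_nonneg (mul_nonneg hfp.le hs0), mul_pow, hyp]
      linear_combination hgi2 / 2
    · rw [hθ]
      simp only [norm_smul, Real.norm_eq_abs, abs_of_pos hfp,
        abs_of_nonneg (mul_nonneg hfp.le hs0), mul_pow, hyp]
      have haux : 0 < 4 * ε - 2 * s ^ 2 * ‖ym‖ ^ 2 - 2 * ε * s ^ 2 - ‖ym‖ ^ 2 := by
        have hs2 : s ^ 2 ≤ 1 / 4 := by nlinarith
        nlinarith [mul_le_mul_of_nonneg_right hs2 (sq_nonneg ‖ym‖),
          mul_le_mul_of_nonneg_left hs2 hε.le, sq_nonneg ‖ym‖]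
      nlinarith [hgi2, mul_pos (pow_pos hfp 2) haux]
  · -- flow
    intro yp ym s hyp hym hs0 hs1
    have hlog : Real.log s < 0 := Real.log_neg hs0 (by linarith)
    refine ⟨by linarith, ?_⟩
    rw [hθ, hΦ]
    have hsne : s ≠ 0 := hs0.ne'
    have e1 : Real.exp (-(-Real.log s)) = s := by
      rw [neg_neg, Real.exp_log hs0]
    have e2 : Real.exp (-Real.log s) = s⁻¹ := by
      rw [Real.exp_neg, Real.exp_log hs0]
    simp only [e1, e2, smul_smul]
    have c1 : s * f ym s = f ym s * s := mul_comm _ _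
    have c2 : s⁻¹ * (f ym s * s) = f ym s := by field_simp
    rw [c1, c2]
end

section
/- Let M be a smooth (C^∞) finite-dimensional manifold without boundary (Hausdorff, second countable), let X be a smooth vector field on M, and let γ : ℝ → M be an integral curve of X. If γ(t) converges to a point y ∈ M as t → +∞, then X(y) = 0. -/
open scoped Manifold
open Set Filter Topology
set_option maxHeartbeats 800000

/-- If an integral curve of a smooth vector field on a smooth manifold converges as
`t → +∞`, then the vector field vanishes at the limit point. -/
theorem stmt_10 {d : ℕ} {M : Type*} [TopologicalSpace M] [T2Space M]
    [SecondCountableTopology M] [ChartedSpace (EuclideanSpace ℝ (Fin d)) M]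
    [IsManifold (𝓡 d) (⊤ : ℕ∞) M]
    (X : (x : M) → TangentSpace (𝓡 d) x)
    (hX : ContMDiff (𝓡 d) (𝓡 d).tangent (⊤ : ℕ∞)
      (fun x => (⟨x, X x⟩ : TangentBundle (𝓡 d) M)))
    (γ : ℝ → M) (hγ : IsMIntegralCurve γ X) (y : M)
    (hy : Filter.Tendsto γ Filter.atTop (nhds y)) : X y = 0 := by
  by_contra hXy
  -- the coordinate representation of X near y
  have hg : ∀ x : M, tangentCoordChange (𝓡 d) x y x (X x)
      = ((trivializationAt (EuclideanSpace ℝ (Fin d)) (TangentSpace (𝓡 d)) y)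
        (⟨x, X x⟩ : TangentBundle (𝓡 d) M)).2 := fun x => rfl
  have hGy : tangentCoordChange (𝓡 d) y y y (X y) = X y :=
    tangentCoordChange_self (mem_extChartAt_source y)
  have hgcont : ContinuousAt (fun x => tangentCoordChange (𝓡 d) x y x (X x)) y := by
    have h1 : ContinuousAt (fun x => (⟨x, X x⟩ : TangentBundle (𝓡 d) M)) y :=
      hX.continuous.continuousAt
    have h2 : ContinuousAt (trivializationAt (EuclideanSpace ℝ (Fin d)) (TangentSpace (𝓡 d)) y)
        (⟨y, X y⟩ : TangentBundle (𝓡 d) M) := by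
      refine (trivializationAt _ _ y).continuousOn.continuousAt
        ((trivializationAt _ _ y).open_source.mem_nhds ?_)
      rw [Bundle.Trivialization.mem_source]
      exact FiberBundle.mem_baseSet_trivializationAt' y
    have h3 := continuous_snd.continuousAt.comp
      (h2.comp (f := fun x => (⟨x, X x⟩ : TangentBundle (𝓡 d) M)) h1)
    exact h3
  have hgt : Tendsto (fun t => tangentCoordChange (𝓡 d) (γ t) y (γ t) (X (γ t)))
      atTop (𝓝 (X y)) := by
    have := hgcont.tendsto.comp hy
    rwa [hGy] at this
  -- eventually γ t is in the chart at y
  have hsrc : ∀ᶠ t in atTop, γ t ∈ (extChartAt (𝓡 d) y).source :=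
    hy (extChartAt_source_mem_nhds y)
  -- derivative of the coordinate curve
  have hderiv : ∀ t : ℝ, γ t ∈ (extChartAt (𝓡 d) y).source →
      HasDerivAt ((extChartAt (𝓡 d) y) ∘ γ)
        (tangentCoordChange (𝓡 d) (γ t) y (γ t) (X (γ t))) t := by
    intro t hs
    rw [extChartAt_source (𝓡 d)] at hs
    refine hasDerivAt_iff_hasFDerivAt.mpr (hasMFDerivAt_iff_hasFDerivAt.mp ?_)
    apply (HasMFDerivAt.comp t (hasMFDerivAt_extChartAt (I := 𝓡 d) hs) (hγ t)).congr_mfderiv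
    apply ContinuousLinearMap.ext
    intro a
    simp only [ContinuousLinearMap.coe_comp', Function.comp_apply, ContinuousLinearMap.smulRight_apply,
      ContinuousLinearMap.one_apply, map_smul, ContinuousLinearMap.toSpanSingleton_apply]
    rw [mfderiv_chartAt_eq_tangentCoordChange hs]
    exact (tangentCoordChange (𝓡 d) (γ t) y (γ t)).map_smul (show ℝ from a) (X (γ t))
  -- set up the scalar function φ
  let v : EuclideanSpace ℝ (Fin d) := X y
  have hvX : v = X y := rfl
  have hgt' : Tendsto (fun t => tangentCoordChange (𝓡 d) (γ t) y (γ t) (X (γ t)))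
      atTop (𝓝 v) := hgt
  have hv : (0:ℝ) < ‖v‖ := norm_pos_iff.mpr hXy
  set φ : ℝ → ℝ := fun t => inner ℝ v ((extChartAt (𝓡 d) y ∘ γ) t) with hφ
  have hφt : Tendsto φ atTop (𝓝 (inner ℝ v (extChartAt (𝓡 d) y y))) := by
    apply Tendsto.inner tendsto_const_nhds
    exact ((continuousAt_extChartAt (I := 𝓡 d) y).tendsto.comp hy)
  -- eventually the derivative of φ is large
  have hlarge : ∀ᶠ t in atTop,
      ‖v‖^2 / 2 ≤ inner ℝ v (tangentCoordChange (𝓡 d) (γ t) y (γ t) (X (γ t))) := by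
    have h4 : ∀ᶠ t in atTop,
        ‖tangentCoordChange (𝓡 d) (γ t) y (γ t) (X (γ t)) - v‖ < ‖v‖ / 2 := by
      have := Metric.tendsto_nhds.mp hgt' (‖v‖/2) (by positivity)
      filter_upwards [this] with t ht
      simpa [dist_eq_norm] using ht
    filter_upwards [h4] with t ht
    set w := tangentCoordChange (𝓡 d) (γ t) y (γ t) (X (γ t))
    have h1 : (inner ℝ v w : ℝ) = ‖v‖^2 + inner ℝ v (w - v) := by
      rw [inner_sub_right, real_inner_self_eq_norm_sq]; ring
    have h2 : |(inner ℝ v (w - v) : ℝ)| ≤ ‖v‖ * (‖v‖/2) := by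
      refine le_trans (abs_real_inner_le_norm _ _) ?_
      exact mul_le_mul_of_nonneg_left ht.le (norm_nonneg _)
    nlinarith [abs_le.mp h2]
  -- pick T
  obtain ⟨T, hT⟩ := (hsrc.and hlarge).exists_forall_of_atTop
  -- φ (t+1) - φ t ≥ ‖v‖²/2 for t ≥ T
  have key : ∀ t ≥ T, ‖v‖^2/2 ≤ φ (t+1) - φ t := by
    intro t ht
    have hD : ∀ s ∈ Icc t (t+1), HasDerivAt φ
        (inner ℝ v (tangentCoordChange (𝓡 d) (γ s) y (γ s) (X (γ s)))) s := by
      intro s hs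
      have hsT : T ≤ s := le_trans ht hs.1
      have := (hasDerivAt_const s v).inner ℝ
        (hderiv s (hT s hsT).1)
      simpa [hφ] using this
    obtain ⟨c, hc, hceq⟩ := exists_hasDerivAt_eq_slope φ
      (fun s => inner ℝ v (tangentCoordChange (𝓡 d) (γ s) y (γ s) (X (γ s))))
      (by linarith : t < t + 1)
      (fun s hs => (hD s hs).continuousAt.continuousWithinAt)
      (fun s hs => hD s ⟨hs.1.le, hs.2.le⟩)
    have heq2 : (inner ℝ v (tangentCoordChange (𝓡 d) (γ c) y (γ c) (X (γ c))) : ℝ)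
        = φ (t+1) - φ t := by
      rw [hceq]; field_simp; ring
    rw [← heq2]
    exact (hT c (le_trans ht hc.1.le)).2
  -- but φ(t+1) - φ t → 0
  have h0 : Tendsto (fun t => φ (t+1) - φ t) atTop (𝓝 0) := by
    have := (hφt.comp (tendsto_atTop_add_const_right atTop 1 tendsto_id)).sub hφt
    simpa using this
  have hfin : ‖v‖^2/2 ≤ 0 := ge_of_tendsto h0 (eventually_atTop.mpr ⟨T, key⟩)
  nlinarith
end

section
/- Let 0 ≤ k ≤ n and let z⁺ ∈ ℝ^{n−k} with z⁺ ≠ 0. Define y : [0, ‖z⁺‖²/2) → ℝ^k × ℝ^{n−k} by y(s) = (0, (1 − 2s/‖z⁺‖²)^{1/2} z⁺). Then y(0) = (0, z⁺); for every s ∈ [0, ‖z⁺‖²/2), y(s) ≠ 0 and y'(s) = Y^{(k)}(y(s)); h_k(y(s)) = h_k(0, z⁺) − s for every such s; and y(s) → 0 as s → ‖z⁺‖²/2 from the left. -/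
/-- The explicit solution `y(s) = (0, (1 - 2s/‖z⁺‖²)^{1/2} z⁺)` of the rescaled standard
vector field `Y^{(k)}(x) = ‖x‖⁻²(x⁻, -x⁺)` starting at `(0, z⁺)`: it decreases `h_k` at unit
speed and converges to the critical point `0` as `s → ‖z⁺‖²/2` from the left. -/
theorem stmt_12 (n k : ℕ) (hkn : k ≤ n)
    (z : EuclideanSpace ℝ (Fin (n - k))) (hz : z ≠ 0)
    (hfun : EuclideanSpace ℝ (Fin k) × EuclideanSpace ℝ (Fin (n - k)) → ℝ)
    (hhfun : ∀ x, hfun x = -‖x.1‖ ^ 2 / 2 + ‖x.2‖ ^ 2 / 2)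
    (Y : EuclideanSpace ℝ (Fin k) × EuclideanSpace ℝ (Fin (n - k)) →
         EuclideanSpace ℝ (Fin k) × EuclideanSpace ℝ (Fin (n - k)))
    (hY : ∀ x, x ≠ 0 → Y x = (‖x.1‖ ^ 2 + ‖x.2‖ ^ 2)⁻¹ • (x.1, -x.2))
    (y : ℝ → EuclideanSpace ℝ (Fin k) × EuclideanSpace ℝ (Fin (n - k)))
    (hy : ∀ s, y s = (0, Real.sqrt (1 - 2 * s / ‖z‖ ^ 2) • z)) :
    y 0 = (0, z) ∧
    (∀ s, 0 ≤ s → s < ‖z‖ ^ 2 / 2 →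
      y s ≠ 0 ∧ HasDerivAt y (Y (y s)) s ∧ hfun (y s) = hfun (0, z) - s) ∧
    Filter.Tendsto y (nhdsWithin (‖z‖ ^ 2 / 2) (Set.Iio (‖z‖ ^ 2 / 2))) (nhds 0) := by
  have hc : (0:ℝ) < ‖z‖ ^ 2 := pow_pos (norm_pos_iff.mpr hz) 2
  have hyfun : y = fun s => ((0 : EuclideanSpace ℝ (Fin k)),
      Real.sqrt (1 - 2 * s / ‖z‖ ^ 2) • z) := funext hy
  refine ⟨?_, ?_, ?_⟩
  · rw [hy]
    simp [div_self hc.ne']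
  · intro s hs0 hs1
    have hg : 0 < 1 - 2 * s / ‖z‖ ^ 2 := by
      rw [sub_pos, div_lt_one hc]; linarith
    have hf : 0 < Real.sqrt (1 - 2 * s / ‖z‖ ^ 2) := Real.sqrt_pos.mpr hg
    have hne : y s ≠ 0 := by
      rw [hy]
      intro h
      have h2 := congrArg Prod.snd h
      simp only [Prod.snd_zero, smul_eq_zero] at h2
      rcases h2 with h1 | h2
      · exact hf.ne' h1
      · exact hz h2
    refine ⟨hne, ?_, ?_⟩
    · have hgd : HasDerivAt (fun t : ℝ => 1 - 2 * t / ‖z‖ ^ 2) (-(2 * 1 / ‖z‖ ^ 2)) s := by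
        exact (((hasDerivAt_id s).const_mul 2).div_const (‖z‖^2)).const_sub 1
      have hsq : HasDerivAt (fun t : ℝ => Real.sqrt (1 - 2 * t / ‖z‖ ^ 2))
          (1 / (2 * Real.sqrt (1 - 2 * s / ‖z‖ ^ 2)) * (-(2 * 1 / ‖z‖ ^ 2))) s :=
        (Real.hasDerivAt_sqrt hg.ne').comp s hgd
      have hd := (HasDerivAt.prodMk (hasDerivAt_const s (0 : EuclideanSpace ℝ (Fin k)))
        (hsq.smul_const z))
      rw [hyfun]
      convert hd using 1
      beta_reduce
      rw [← hy s, hY _ hne, hy]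
      have hns : ‖Real.sqrt (1 - 2 * s / ‖z‖ ^ 2) • z‖ ^ 2
          = (1 - 2 * s / ‖z‖ ^ 2) * ‖z‖ ^ 2 := by
        rw [norm_smul, mul_pow, Real.norm_eq_abs, sq_abs, Real.sq_sqrt hg.le]
      simp only [Prod.smul_mk, smul_zero, norm_zero, ne_eq]
      rw [hns]
      refine Prod.ext (by simp) ?_
      simp only [smul_neg, ← neg_smul, smul_smul]
      congr 1
      have hr2 : Real.sqrt (1 - 2 * s / ‖z‖ ^ 2) ^ 2 = 1 - 2 * s / ‖z‖ ^ 2 :=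
        Real.sq_sqrt hg.le
      generalize hr : Real.sqrt (1 - 2 * s / ‖z‖ ^ 2) = r at hf hr2 ⊢
      rw [← hr2]
      field_simp
      ring
    · rw [hhfun, hhfun, hy]
      have hns : ‖Real.sqrt (1 - 2 * s / ‖z‖ ^ 2) • z‖ ^ 2
          = (1 - 2 * s / ‖z‖ ^ 2) * ‖z‖ ^ 2 := by
        rw [norm_smul, mul_pow, Real.norm_eq_abs, sq_abs, Real.sq_sqrt hg.le]
      simp only [hns, norm_zero]
      field_simp
      ring
  · have hcont : Continuous y := by
      rw [hyfun]
      exact continuous_const.prodMk <|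
        ((Real.continuous_sqrt.comp (by continuity)).smul continuous_const)
    have hval : y (‖z‖ ^ 2 / 2) = 0 := by
      rw [hy]
      have : 1 - 2 * (‖z‖ ^ 2 / 2) / ‖z‖ ^ 2 = 0 := by field_simp; norm_num
      simp [this]
    have := hcont.tendsto (‖z‖ ^ 2 / 2)
    rw [hval] at this
    exact this.mono_left nhdsWithin_le_nhds
end

section
/- Let M be a smooth (C^∞) finite-dimensional manifold without boundary (Hausdorff, second countable), let h : M → ℝ be smooth and proper, and let X be a smooth vector field on M for which there is a constant C with |d_x h(X(x))| ≤ C for all x ∈ M. Then X is complete: for every x ∈ M there exists an integral curve γ : ℝ → M of X with γ(0) = x. -/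
open Set Metric Function
open scoped Manifold Topology NNReal

section PL
variable {E : Type*} [NormedAddCommGroup E] [NormedSpace ℝ E] [CompleteSpace E]

/-- Strengthened Picard–Lindelöf: the solution stays in the closed ball. -/
theorem my_pl {f : ℝ → E → E} {tmin tmax : ℝ} {t₀ : Icc tmin tmax} {x₀ : E} {a L K : ℝ≥0}
    (hf : IsPicardLindelof f t₀ x₀ a 0 L K) :
    ∃ α : ℝ → E, α t₀ = x₀ ∧ (∀ t ∈ Icc tmin tmax, α t ∈ closedBall x₀ a) ∧
      ∀ t ∈ Icc tmin tmax, HasDerivWithinAt α (f t (α t)) (Icc tmin tmax) t := by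
  obtain ⟨α, hα⟩ := ODE.FunSpace.exists_isFixedPt_next hf (mem_closedBall_self le_rfl)
  refine ⟨α.compProj, by rw [ODE.FunSpace.compProj_val, ← hα, ODE.FunSpace.next_apply₀],
    fun _ _ => α.compProj_mem_closedBall hf.mul_max_le, fun t ht ↦ ?_⟩
  apply ODE.hasDerivWithinAt_picard_Icc t₀.2 hf.continuousOn_uncurry
    α.continuous_compProj.continuousOn (fun _ ht' ↦ α.compProj_mem_closedBall hf.mul_max_le)
    x₀ ht |>.congr_of_mem _ ht
  intro t' ht'
  nth_rw 1 [← hα]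
  rw [ODE.FunSpace.compProj_of_mem ht', ODE.FunSpace.next_apply]

/-- Uniform-time solutions for a time-independent `C^1` ODE: all initial conditions in a
small closed ball admit solutions on a uniform time interval, staying in a given
neighbourhood `s` of `z₀`. -/
theorem exists_uniform_solution {V : E → E} {z₀ : E} (hV : ContDiffAt ℝ 1 V z₀)
    {s : Set E} (hs : s ∈ 𝓝 z₀) :
    ∃ ε > (0 : ℝ), ∃ r > (0 : ℝ), ∀ (t₀ : ℝ) (y : E), y ∈ closedBall z₀ r →
      ∃ f : ℝ → E, f t₀ = y ∧ (∀ t ∈ Icc (t₀ - ε) (t₀ + ε), f t ∈ s) ∧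
        ∀ t ∈ Ioo (t₀ - ε) (t₀ + ε), HasDerivAt f (V (f t)) t := by
  obtain ⟨L, u, hu, hlip⟩ := hV.exists_lipschitzOnWith
  obtain ⟨R, hR0, hRsub⟩ := Metric.mem_nhds_iff.mp (Filter.inter_mem hu hs)
  set r := R / 4 with hr
  have hr0 : 0 < r := by positivity
  have h3r : closedBall z₀ (3 * r) ⊆ u ∩ s := fun x hx =>
    hRsub (lt_of_le_of_lt (mem_closedBall.mp hx) (by rw [hr]; linarith))
  set C := ‖V z₀‖ + L * (3 * r) with hCdef
  have hC0 : 0 ≤ C := by positivity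
  have hbound : ∀ x ∈ closedBall z₀ (3 * r), ‖V x‖ ≤ C := by
    intro x hx
    have h1 : ‖V x - V z₀‖ ≤ L * ‖x - z₀‖ := by
      have := hlip.dist_le_mul x ((h3r hx).1) z₀ (mem_of_mem_nhds hu)
      simpa [dist_eq_norm] using this
    have h2 : ‖x - z₀‖ ≤ 3 * r := by
      simpa [dist_eq_norm] using mem_closedBall.mp hx
    calc ‖V x‖ = ‖V z₀ + (V x - V z₀)‖ := by rw [add_sub_cancel]
    _ ≤ ‖V z₀‖ + ‖V x - V z₀‖ := norm_add_le _ _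
    _ ≤ ‖V z₀‖ + L * (3 * r) := by
        have : (L : ℝ) * ‖x - z₀‖ ≤ L * (3 * r) := by
          apply mul_le_mul_of_nonneg_left h2 L.coe_nonneg
        linarith [h1.trans this]
  set ε := r / (C + 1) with hε
  have hε0 : 0 < ε := by positivity
  refine ⟨ε, hε0, r, hr0, fun t₀ y hy => ?_⟩
  have hpl : IsPicardLindelof (fun _ => V) (tmin := t₀ - ε) (tmax := t₀ + ε)
      ⟨t₀, by constructor <;> linarith⟩ y ⟨2 * r, by positivity⟩ 0 ⟨C + 1, by positivity⟩ L := by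
    have hsub : closedBall y (2 * r) ⊆ closedBall z₀ (3 * r) := by
      apply closedBall_subset_closedBall'
      have := mem_closedBall.mp hy
      linarith
    exact
      { lipschitzOnWith := fun t _ => (hlip.mono (hsub.trans (fun x hx => (h3r hx).1)))
        continuousOn := fun _ _ => continuousOn_const
        norm_le := fun t _ x hx => (hbound x (hsub hx)).trans (by show C ≤ C + 1; linarith)
        mul_max_le := by
          show (C + 1) * max (t₀ + ε - t₀) (t₀ - (t₀ - ε)) ≤ 2 * r - 0
          rw [sub_zero]
          have : max (t₀ + ε - t₀) (t₀ - (t₀ - ε)) = ε := by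
            simp
          rw [this, hε]
          rw [mul_div_assoc', div_le_iff₀ (by positivity)]
          nlinarith [hC0, hr0] }
  obtain ⟨f, hf0, hfmem, hfderiv⟩ := my_pl hpl
  refine ⟨f, hf0, fun t ht => ?_, fun t ht => ?_⟩
  · have h1 : f t ∈ closedBall y (2 * r) := hfmem t ht
    have : f t ∈ closedBall z₀ (3 * r) := by
      apply closedBall_subset_closedBall' _ h1
      have := mem_closedBall.mp hy
      linarith
    exact (h3r this).2
  · exact (hfderiv t (Ioo_subset_Icc_self ht)).hasDerivAt (Icc_mem_nhds ht.1 ht.2)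

end PL

section FlowBox

variable {E : Type*} [NormedAddCommGroup E] [NormedSpace ℝ E] [CompleteSpace E]
  {H : Type*} [TopologicalSpace H] {I : ModelWithCorners ℝ E H} [I.Boundaryless]
  {M : Type*} [TopologicalSpace M] [ChartedSpace H M] [IsManifold I (⊤ : ℕ∞) M]
  {v : (x : M) → TangentSpace I x}

/-- Flow box: around every point there is a neighbourhood `U` and a uniform time `ε` such that
through every point of `U` and every initial time `t₀` there is an integral curve defined on
`Ioo (t₀ - ε) (t₀ + ε)`. -/
theorem my_flowbox (x₀ : M)
    (hv : ContMDiff I I.tangent 1 (fun x ↦ (⟨x, v x⟩ : TangentBundle I M))) :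
    ∃ ε > (0 : ℝ), ∃ U : Set M, IsOpen U ∧ x₀ ∈ U ∧ ∀ (t₀ : ℝ) (y : M), y ∈ U →
      ∃ γ : ℝ → M, γ t₀ = y ∧ IsMIntegralCurveOn γ v (Set.Ioo (t₀ - ε) (t₀ + ε)) := by
  have hx : I.IsInteriorPoint x₀ := BoundarylessManifold.isInteriorPoint
  have hv' := hv.contMDiffAt (x := x₀)
  rw [contMDiffAt_iff] at hv'
  obtain ⟨_, hv'⟩ := hv'
  have hV : ContDiffAt ℝ 1
      (fun z => (extChartAt I.tangent (⟨x₀, v x₀⟩ : TangentBundle I M)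
        ((fun x ↦ (⟨x, v x⟩ : TangentBundle I M)) ((extChartAt I x₀).symm z))).2)
      (extChartAt I x₀ x₀) :=
    (hv'.contDiffAt (range_mem_nhds_isInteriorPoint hx)).snd
  have hsnhds : interior (extChartAt I x₀).target ∈ 𝓝 (extChartAt I x₀ x₀) :=
    isOpen_interior.mem_nhds ((I.isInteriorPoint_iff).mp hx)
  obtain ⟨ε, hε0, r, hr0, hsol⟩ := exists_uniform_solution hV hsnhds
  refine ⟨ε, hε0, (extChartAt I x₀).source ∩ extChartAt I x₀ ⁻¹' ball (extChartAt I x₀ x₀) r,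
    by rw [extChartAt_source]; exact isOpen_extChartAt_preimage x₀ isOpen_ball,
    ⟨mem_extChartAt_source x₀, by simp [hr0]⟩, fun t₀ y hy => ?_⟩
  obtain ⟨f, hf1, hfmem, hf2⟩ := hsol t₀ (extChartAt I x₀ y) (ball_subset_closedBall hy.2)
  refine ⟨(extChartAt I x₀).symm ∘ f, ?_, ?_⟩
  · show (extChartAt I x₀).symm (f t₀) = y
    rw [hf1, PartialEquiv.left_inv _ hy.1]
  intros t ht
  apply HasMFDerivAt.hasMFDerivWithinAt
  -- collect useful terms in convenient forms
  let xₜ : M := (extChartAt I x₀).symm (f t) -- `xₜ := γ t`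
  have h : HasDerivAt f (x := t) <| fderivWithin ℝ (extChartAt I x₀ ∘ (extChartAt I xₜ).symm)
      (Set.range I) (extChartAt I xₜ xₜ) (v xₜ) := hf2 t ht
  rw [← tangentCoordChange_def] at h
  have hf3 : f t ∈ interior (extChartAt I x₀).target := hfmem t (Set.Ioo_subset_Icc_self ht)
  have hf3' := Set.mem_of_mem_of_subset hf3 interior_subset
  have hft1 := Set.mem_preimage.mp <|
    Set.mem_of_mem_of_subset hf3' (extChartAt I x₀).target_subset_preimage_source
  have hft2 := mem_extChartAt_source (I := I) xₜ
  -- express the derivative of the integral curve in the local chart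
  refine ⟨(continuousAt_extChartAt_symm'' hf3').comp h.continuousAt,
    @HasDerivWithinAt.hasFDerivWithinAt ℝ _ E _ _ _ _ _ _
      (by exact (inferInstance : ContinuousSMul ℝ E)) _ ?_⟩
  simp only [mfld_simps, hasDerivWithinAt_univ]
  refine (?_ : HasDerivAt ((extChartAt I xₜ ∘ (extChartAt I x₀).symm) ∘ f) (v xₜ) t).hasDerivWithinAt
  rw [← tangentCoordChange_self (I := I) (x := xₜ) (z := xₜ) (v := v xₜ) hft2,
    ← tangentCoordChange_comp (x := x₀) (v := (show E from v xₜ)) ⟨⟨hft2, hft1⟩, hft2⟩]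
  apply HasFDerivAt.comp_hasDerivAt _ _ h
  apply HasFDerivWithinAt.hasFDerivAt (s := Set.range I) _ <|
    mem_nhds_iff.mpr ⟨interior (extChartAt I x₀).target,
      Set.Subset.trans interior_subset (extChartAt_target_subset_range ..),
      isOpen_interior, hf3⟩
  rw [← (extChartAt I x₀).right_inv hf3']
  exact hasFDerivWithinAt_tangentCoordChange ⟨hft1, hft2⟩

end FlowBox

open scoped Manifold

/-- A smooth vector field `X` on a manifold carrying a proper smooth function `h` with
`|d_x h (X x)|` uniformly bounded is complete: through every point there is an integral
curve defined on all of `ℝ`. -/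
theorem stmt_13 {d : ℕ} {M : Type*} [TopologicalSpace M] [T2Space M]
    [SecondCountableTopology M]
    [ChartedSpace (EuclideanSpace ℝ (Fin d)) M]
    [IsManifold (𝓡 d) (⊤ : ℕ∞) M]
    (h : M → ℝ) (hh : ContMDiff (𝓡 d) 𝓘(ℝ, ℝ) (⊤ : ℕ∞) h)
    (hproper : ∀ K : Set ℝ, IsCompact K → IsCompact (h ⁻¹' K))
    (X : (x : M) → TangentSpace (𝓡 d) x)
    (hX : ContMDiff (𝓡 d) (𝓡 d).tangent (⊤ : ℕ∞)
      (fun x => (⟨x, X x⟩ : TangentBundle (𝓡 d) M)))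
    (C : ℝ) (hC : ∀ x : M, |show ℝ from mfderiv (𝓡 d) 𝓘(ℝ, ℝ) h x (X x)| ≤ C) :
    ∀ x : M, ∃ γ : ℝ → M, γ 0 = x ∧ IsMIntegralCurve γ X := by
  have hX1 : ContMDiff (𝓡 d) (𝓡 d).tangent 1
      (fun x => (⟨x, X x⟩ : TangentBundle (𝓡 d) M)) := hX.of_le (by norm_cast)
  intro x
  rw [exists_isMIntegralCurve_iff_exists_isMIntegralCurveOn_Ioo hX1]
  by_contra hS
  push_neg at hS
  obtain ⟨a₀, ha₀⟩ := hS
  set s : Set ℝ := {a | ∃ γ : ℝ → M, γ 0 = x ∧ IsMIntegralCurveOn γ X (Ioo (-a) a)}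
    with hs_def
  have hmono : ∀ {a b : ℝ}, a ≤ b → b ∈ s → a ∈ s := by
    rintro a b hab ⟨γ, h1, h2⟩
    exact ⟨γ, h1, h2.mono (Ioo_subset_Ioo (neg_le_neg hab) hab)⟩
  have hbdd : BddAbove s := by
    refine ⟨a₀, fun a ha => ?_⟩
    by_contra hc
    push_neg at hc
    obtain ⟨γ, h1, h2⟩ := hmono hc.le ha
    exact ha₀ γ h1 h2
  -- `s` contains a positive element, by local existence
  obtain ⟨γ₀, hγ₀0, hγ₀⟩ :=
    exists_isMIntegralCurveAt_of_contMDiffAt_boundaryless (0 : ℝ) (hX1.contMDiffAt (x := x))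
  rw [isMIntegralCurveAt_iff] at hγ₀
  obtain ⟨s0, hs0, hγ₀on⟩ := hγ₀
  obtain ⟨ε₀, hε₀0, hball⟩ := Metric.mem_nhds_iff.mp hs0
  have hε₀s : ε₀ ∈ s := by
    refine ⟨γ₀, hγ₀0, hγ₀on.mono ?_⟩
    intro t ht
    apply hball
    rw [Real.ball_eq_Ioo, zero_sub, zero_add]
    exact ht
  have hsne : s.Nonempty := ⟨ε₀, hε₀s⟩
  set T := sSup s with hT_def
  have hT0 : 0 < T := lt_of_lt_of_le hε₀0 (le_csSup hbdd hε₀s)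
  have hall : ∀ a : ℝ, a < T → a ∈ s := by
    intro a ha
    obtain ⟨b, hb, hab⟩ := exists_lt_of_lt_csSup hsne ha
    exact hmono hab.le hb
  -- choose a coherent family of curves
  have hfam : ∀ a : ℝ, ∃ g : ℝ → M, g 0 = x ∧
      (a < T → IsMIntegralCurveOn g X (Ioo (-a) a)) := by
    intro a
    by_cases hc : a < T
    · obtain ⟨g, h1, h2⟩ := hall a hc
      exact ⟨g, h1, fun _ => h2⟩
    · exact ⟨fun _ => x, rfl, fun hlt => absurd hlt hc⟩
  choose g hg0 hgI using hfam
  have huniq : ∀ a b : ℝ, a < T → b < T →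
      Set.EqOn (g a) (g b) (Ioo (-(min a b)) (min a b)) := by
    intro a b ha hb
    rcases le_or_gt (min a b) 0 with hm | hm
    · intro t ht
      exact absurd ht (by rw [Set.Ioo_eq_empty (by linarith)]; exact notMem_empty t)
    · refine isMIntegralCurveOn_Ioo_eqOn_of_contMDiff_boundaryless (t₀ := 0)
        ⟨by linarith, hm⟩ hX1
        ((hgI a ha).mono (Ioo_subset_Ioo (neg_le_neg (min_le_left a b)) (min_le_left a b)))
        ((hgI b hb).mono (Ioo_subset_Ioo (neg_le_neg (min_le_right a b)) (min_le_right a b)))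
        (by rw [hg0, hg0])
  set Γ : ℝ → M := fun t => g ((|t| + T) / 2) t with hΓ_def
  have hΓ : IsMIntegralCurveOn Γ X (Ioo (-T) T) := by
    intro t ht
    have habs : |t| < T := abs_lt.mpr ⟨ht.1, ht.2⟩
    set a := (|t| + T) / 2 with ha_def
    have ha1 : |t| < a := by rw [ha_def]; linarith
    have ha2 : a < T := by rw [ha_def]; linarith
    have key := (hgI a ha2 t (abs_lt.mp ha1)).hasMFDerivAt (isOpen_Ioo.mem_nhds (abs_lt.mp ha1))
    apply HasMFDerivAt.hasMFDerivWithinAt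
    apply key.congr_of_eventuallyEq
    rw [Filter.eventuallyEq_iff_exists_mem]
    refine ⟨Ioo (-a) a, isOpen_Ioo.mem_nhds (abs_lt.mp ha1), ?_⟩
    intro t' ht'
    have habs' : |t'| < a := abs_lt.mpr ⟨ht'.1, ht'.2⟩
    set b := (|t'| + T) / 2 with hb_def
    have hb1 : |t'| < b := by rw [hb_def]; linarith
    have hb2 : b < T := by rw [hb_def]; linarith
    exact huniq b a hb2 ha2 (abs_lt.mp (lt_min hb1 habs'))
  have hΓ0 : Γ 0 = x := hg0 _
  -- the composition `h ∘ Γ` is Lipschitz with constant `C`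
  have hC0 : 0 ≤ C := le_trans (abs_nonneg _) (hC x)
  have hday : ∀ t ∈ Ioo (-T) T, HasDerivWithinAt (h ∘ Γ)
      (mfderiv (𝓡 d) 𝓘(ℝ, ℝ) h (Γ t) (X (Γ t))) (Ioo (-T) T) t := by
    intro t ht
    have h1 : HasMFDerivAt 𝓘(ℝ, ℝ) (𝓡 d) Γ t
        ((1 : ℝ →L[ℝ] ℝ).smulRight (X (Γ t))) := (hΓ t ht).hasMFDerivAt (isOpen_Ioo.mem_nhds ht)
    have h2 : HasMFDerivAt (𝓡 d) 𝓘(ℝ, ℝ) h (Γ t) (mfderiv (𝓡 d) 𝓘(ℝ, ℝ) h (Γ t)) :=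
      (hh.mdifferentiableAt (by simp)).hasMFDerivAt
    have h3 := h2.comp t h1
    rw [hasMFDerivAt_iff_hasFDerivAt] at h3
    have h4 : HasDerivAt (h ∘ Γ)
        (mfderiv (𝓡 d) 𝓘(ℝ, ℝ) h (Γ t) ((1:ℝ) • X (Γ t))) t :=
          @HasFDerivAt.hasDerivAt ℝ _ ℝ _ _ _ _ _ (by exact (inferInstance : ContinuousSMul ℝ ℝ)) _ h3
    rw [one_smul] at h4
    exact h4.hasDerivWithinAt
  have hΓK : ∀ t ∈ Ioo (-T) T, Γ t ∈ h ⁻¹' Icc (h x - C * T) (h x + C * T) := by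
    intro t ht
    have hlip := Convex.norm_image_sub_le_of_norm_hasDerivWithin_le
      (f := h ∘ Γ) hday
      (fun u _ => by exact (Real.norm_eq_abs _).trans_le (hC (Γ u)))
      (convex_Ioo _ _) (⟨neg_neg_iff_pos.mpr hT0, hT0⟩ : (0:ℝ) ∈ Ioo (-T) T) ht
    have habs : |t| ≤ T := (abs_lt.mpr ⟨ht.1, ht.2⟩).le
    rw [Function.comp_apply, Function.comp_apply, hΓ0, Real.norm_eq_abs, sub_zero,
      Real.norm_eq_abs] at hlip
    have h6 : |h (Γ t) - h x| ≤ C * T :=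
      hlip.trans (by nlinarith [abs_nonneg t])
    obtain ⟨h7, h8⟩ := abs_le.mp h6
    exact ⟨by linarith, by linarith⟩
  have hK : IsCompact (h ⁻¹' Icc (h x - C * T) (h x + C * T)) := hproper _ isCompact_Icc
  -- extract a limit point of `Γ` near the right endpoint, and extend there
  have hmapK : Filter.map Γ (𝓝[<] T) ≤ Filter.principal (h ⁻¹' Icc (h x - C * T) (h x + C * T)) := by
    rw [Filter.le_principal_iff, Filter.mem_map]
    exact Filter.mem_of_superset (Ioo_mem_nhdsLT_of_mem ⟨by linarith, le_rfl⟩)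
      (fun t ht => hΓK t ht)
  obtain ⟨y₁, hy₁K, hy₁⟩ := hK hmapK
  obtain ⟨ε₁, hε₁0, U₁, hU₁open, hy₁U, hflow₁⟩ := my_flowbox y₁ hX1
  have hfreq₁ : ∃ᶠ t in 𝓝[<] T, Γ t ∈ U₁ := by
    rw [← Filter.frequently_map (m := Γ)]
    rw [Filter.frequently_iff]
    intro V hV
    obtain ⟨z, hz1, hz2⟩ := clusterPt_iff_nonempty.mp hy₁ (hU₁open.mem_nhds hy₁U) hV
    exact ⟨z, hz2, hz1⟩
  have hev₁ : ∀ᶠ t in 𝓝[<] T, t ∈ Ioo (max (-T) (T - ε₁ / 2)) T :=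
    Ioo_mem_nhdsLT_of_mem ⟨max_lt (by linarith) (by linarith), le_rfl⟩
  obtain ⟨t₁, ht₁U, ht₁m⟩ := (hfreq₁.and_eventually hev₁).exists
  obtain ⟨δ₁, hδ₁0, hδ₁⟩ := hflow₁ t₁ (Γ t₁) ht₁U
  have ht₁Ioo : t₁ ∈ Ioo (-T) T := ⟨lt_of_le_of_lt (le_max_left _ _) ht₁m.1, ht₁m.2⟩
  have ht₁' : T - ε₁ / 2 < t₁ := lt_of_le_of_lt (le_max_right _ _) ht₁m.1
  -- same at the left endpoint
  have hmapK₂ : Filter.map Γ (𝓝[>] (-T)) ≤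
      Filter.principal (h ⁻¹' Icc (h x - C * T) (h x + C * T)) := by
    rw [Filter.le_principal_iff, Filter.mem_map]
    exact Filter.mem_of_superset (Ioo_mem_nhdsGT_of_mem ⟨le_rfl, by linarith⟩)
      (fun t ht => hΓK t ht)
  obtain ⟨y₂, hy₂K, hy₂⟩ := hK hmapK₂
  obtain ⟨ε₂, hε₂0, U₂, hU₂open, hy₂U, hflow₂⟩ := my_flowbox y₂ hX1
  have hfreq₂ : ∃ᶠ t in 𝓝[>] (-T), Γ t ∈ U₂ := by
    rw [← Filter.frequently_map (m := Γ)]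
    rw [Filter.frequently_iff]
    intro V hV
    obtain ⟨z, hz1, hz2⟩ := clusterPt_iff_nonempty.mp hy₂ (hU₂open.mem_nhds hy₂U) hV
    exact ⟨z, hz2, hz1⟩
  have hev₂ : ∀ᶠ t in 𝓝[>] (-T), t ∈ Ioo (-T) (min T (-T + ε₂ / 2)) :=
    Ioo_mem_nhdsGT_of_mem ⟨le_rfl, lt_min (by linarith) (by linarith)⟩
  obtain ⟨t₂, ht₂U, ht₂m⟩ := (hfreq₂.and_eventually hev₂).exists
  obtain ⟨δ₂, hδ₂0, hδ₂⟩ := hflow₂ t₂ (Γ t₂) ht₂U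
  have ht₂Ioo : t₂ ∈ Ioo (-T) T := ⟨ht₂m.1, lt_of_lt_of_le ht₂m.2 (min_le_left _ _)⟩
  have ht₂' : t₂ < -T + ε₂ / 2 := lt_of_lt_of_le ht₂m.2 (min_le_right _ _)
  -- glue the three curves
  set Γ₁ := Set.piecewise (Ioo (-T) T) Γ δ₁ with hΓ₁_def
  have hΓ₁ := isMIntegralCurveOn_piecewise (t₀ := t₁) hX1 hΓ hδ₁
    ⟨ht₁Ioo, ⟨by linarith, by linarith⟩⟩ hδ₁0.symm
  have hΓ₁on : IsMIntegralCurveOn Γ₁ X (Ioo (-T) (T + ε₁ / 2)) := by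
    apply hΓ₁.mono
    intro u hu
    rcases lt_or_ge u T with hc | hc
    · exact Or.inl ⟨hu.1, hc⟩
    · exact Or.inr ⟨by linarith [ht₁Ioo.2], by linarith [hu.2]⟩
  have h0mem : (0:ℝ) ∈ Ioo (-T) T := ⟨by linarith, hT0⟩
  have hΓ₁0 : Γ₁ 0 = x := by
    rw [hΓ₁_def, Set.piecewise_eq_of_mem _ _ _ h0mem]
    exact hΓ0
  have hΓ₁t₂ : Γ₁ t₂ = Γ t₂ := Set.piecewise_eq_of_mem _ _ _ ht₂Ioo
  set Γ₂ := Set.piecewise (Ioo (t₂ - ε₂) (t₂ + ε₂)) δ₂ Γ₁ with hΓ₂_def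
  have ht₂mem : t₂ ∈ Ioo (t₂ - ε₂) (t₂ + ε₂) ∩ Ioo (-T) (T + ε₁ / 2) :=
    ⟨⟨by linarith, by linarith⟩, ⟨ht₂Ioo.1, by linarith [ht₂Ioo.2]⟩⟩
  have hδ₂Γ₁ : δ₂ t₂ = Γ₁ t₂ := by rw [hδ₂0, hΓ₁t₂]
  have hΓ₂ := isMIntegralCurveOn_piecewise (t₀ := t₂) hX1 hδ₂ hΓ₁on ht₂mem hδ₂Γ₁
  have hΓ₂0 : Γ₂ 0 = x := by
    have heq := eqOn_piecewise_of_isMIntegralCurveOn_Ioo (t₀ := t₂) hX1 hδ₂ hΓ₁on ht₂mem hδ₂Γ₁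
    rw [hΓ₂_def, heq (⟨by linarith, by linarith⟩ : (0:ℝ) ∈ Ioo (-T) (T + ε₁ / 2))]
    exact hΓ₁0
  set η := min (ε₁ / 2) (ε₂ / 2) with hη_def
  have hη0 : 0 < η := lt_min (by linarith) (by linarith)
  have hTη : T + η ∈ s := by
    refine ⟨Γ₂, hΓ₂0, hΓ₂.mono ?_⟩
    intro u hu
    rcases lt_or_ge (-T) u with hc | hc
    · refine Or.inr ⟨hc, lt_of_lt_of_le hu.2 ?_⟩
      have : η ≤ ε₁ / 2 := min_le_left _ _
      linarith
    · refine Or.inl ⟨?_, ?_⟩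
      · have h10 : η ≤ ε₂ / 2 := min_le_right _ _
        have h9 : -(T + η) ≥ t₂ - ε₂ := by linarith
        linarith [hu.1]
      · linarith [ht₂Ioo.1, hε₂0]
  have := le_csSup hbdd hTη
  linarith
end

section
/- Let M be a smooth (C^∞) finite-dimensional manifold without boundary (Hausdorff, second countable), let X be a smooth vector field on M, and let h : M → ℝ be a smooth function with d_x h(X(x)) < 0 for every x with X(x) ≠ 0. If γ : ℝ → M is an integral curve of X with X(γ(0)) ≠ 0, then X(γ(t)) ≠ 0 for every t ∈ ℝ, and the function t ↦ h(γ(t)) is strictly decreasing on ℝ. -/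
open scoped Manifold

/-- A strict Lyapunov function for a gradient-like vector field: along an integral curve
through a non-rest point, the vector field never vanishes and `h` strictly decreases. -/
theorem stmt_14 {d : ℕ} {M : Type*} [TopologicalSpace M] [T2Space M]
    [SecondCountableTopology M]
    [ChartedSpace (EuclideanSpace ℝ (Fin d)) M]
    [IsManifold (𝓡 d) (⊤ : ℕ∞) M]
    (X : (x : M) → TangentSpace (𝓡 d) x)
    (hX : ContMDiff (𝓡 d) (𝓡 d).tangent (⊤ : ℕ∞)
      (fun x => (⟨x, X x⟩ : TangentBundle (𝓡 d) M)))
    (h : M → ℝ) (hh : ContMDiff (𝓡 d) 𝓘(ℝ, ℝ) (⊤ : ℕ∞) h)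
    (hlyap : ∀ x : M, X x ≠ 0 → (show ℝ from mfderiv (𝓡 d) 𝓘(ℝ, ℝ) h x (X x)) < 0)
    (γ : ℝ → M) (hγ : IsMIntegralCurve γ X) (h0 : X (γ 0) ≠ 0) :
    (∀ t : ℝ, X (γ t) ≠ 0) ∧ StrictAnti (fun t => h (γ t)) := by
  have hX1 : ContMDiff (𝓡 d) (𝓡 d).tangent 1
      (fun x => (⟨x, X x⟩ : TangentBundle (𝓡 d) M)) := hX.of_le (by exact_mod_cast le_top)
  have hne : ∀ t : ℝ, X (γ t) ≠ 0 := by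
    intro t ht
    -- the constant curve at γ t is an integral curve
    have hconst : IsMIntegralCurve (fun _ : ℝ => γ t) X := by
      intro s
      have h0' : HasMFDerivAt 𝓘(ℝ, ℝ) (𝓡 d) (fun _ : ℝ => γ t) s 0 :=
        hasMFDerivAt_const (γ t) s
      convert h0' using 2
      rw [ht]
      simp
      exact Iff.rfl
    have := isMIntegralCurve_Ioo_eq_of_contMDiff_boundaryless (t₀ := t) hX1 hγ hconst rfl
    apply h0
    have h0t : γ 0 = γ t := by
      have := congrFun this 0
      simpa using this
    rw [h0t, ht]
  refine ⟨hne, ?_⟩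
  have hd : ∀ t : ℝ, HasDerivAt (fun t => h (γ t))
      (mfderiv (𝓡 d) 𝓘(ℝ, ℝ) h (γ t) (X (γ t))) t := by
    intro t
    have h1 : HasMFDerivAt 𝓘(ℝ, ℝ) (𝓡 d) γ t
        ((1 : ℝ →L[ℝ] ℝ).smulRight (X (γ t))) := hγ t
    have h2 : HasMFDerivAt (𝓡 d) 𝓘(ℝ, ℝ) h (γ t)
        (mfderiv (𝓡 d) 𝓘(ℝ, ℝ) h (γ t)) :=
      (hh (γ t)).mdifferentiableAt (by simp) |>.hasMFDerivAt
    have h3 := h2.comp t h1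
    rw [hasMFDerivAt_iff_hasFDerivAt] at h3
    have h4 := @HasFDerivAt.hasDerivAt ℝ _ ℝ _ NormedSpace.toModule _ _ _ ContinuousMul.to_continuousSMul _ h3
    refine h4.congr_deriv ?_
    change (mfderiv (𝓡 d) 𝓘(ℝ, ℝ) h (γ t)) ((1 : ℝ) • X (γ t)) = _
    rw [one_smul]
  exact strictAnti_of_hasDerivAt_neg hd (fun t => hlyap _ (hne t))
end

section
/- Let M be a compact smooth (C^∞) finite-dimensional manifold without boundary (Hausdorff, second countable), let X be a smooth vector field on M, let h : M → ℝ be a smooth function with d_x h(X(x)) < 0 for every x with X(x) ≠ 0, and let γ : ℝ → M be an integral curve of X. Then every accumulation point of γ(t) as t → +∞, i.e. every point of ⋂_{T ∈ ℝ} closure(γ([T, ∞))), is a zero of X; the same holds for accumulation points as t → −∞. -/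
open scoped Manifold
open Set Metric

section Aux

variable {d : ℕ} {M : Type*} [TopologicalSpace M] [T2Space M]
    [SecondCountableTopology M] [CompactSpace M]
    [ChartedSpace (EuclideanSpace ℝ (Fin d)) M]
    [IsManifold (𝓡 d) (⊤ : ℕ∞) M]

omit [T2Space M] [SecondCountableTopology M] [CompactSpace M] in
/-- Chart derivative of an integral curve w.r.t. an arbitrary chart. -/
lemma key_hasDerivAt (X : (x : M) → TangentSpace (𝓡 d) x) (γ : ℝ → M)
    (hγ : IsMIntegralCurve γ X) (x₀ : M) {t : ℝ}
    (hsrc : γ t ∈ (extChartAt (𝓡 d) x₀).source) :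
    HasDerivAt ((extChartAt (𝓡 d) x₀) ∘ γ)
      (tangentCoordChange (𝓡 d) (γ t) x₀ (γ t) (X (γ t))) t := by
  rw [extChartAt_source] at hsrc
  rw [hasDerivAt_iff_hasFDerivAt]
  apply (HasMFDerivAt.comp t (hasMFDerivAt_extChartAt (I := 𝓡 d) hsrc) (hγ t)).hasFDerivAt.congr_fderiv
  apply ContinuousLinearMap.ext_ring
  rw [← mfderiv_chartAt_eq_tangentCoordChange hsrc]
  show _ = (1:ℝ) • (mfderiv (𝓡 d) 𝓘(ℝ, EuclideanSpace ℝ (Fin d)) (chartAt (EuclideanSpace ℝ (Fin d)) x₀) (γ t) (X (γ t))); rw [one_smul]; exact congrArg _ (one_smul ℝ _)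

/-- Key lemma: every point of the ω-limit set of an integral curve of a vector field with a
strict Lyapunov function is a zero of the vector field. -/
lemma key_omega_zero (X : (x : M) → TangentSpace (𝓡 d) x)
    (hX : ContMDiff (𝓡 d) (𝓡 d).tangent (⊤ : ℕ∞)
      (fun x => (⟨x, X x⟩ : TangentBundle (𝓡 d) M)))
    (h : M → ℝ) (hh : ContMDiff (𝓡 d) 𝓘(ℝ, ℝ) (⊤ : ℕ∞) h)
    (hlyap : ∀ x : M, X x ≠ 0 → (show ℝ from mfderiv (𝓡 d) 𝓘(ℝ, ℝ) h x (X x)) < 0)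
    (γ : ℝ → M) (hγ : IsMIntegralCurve γ X) :
    ∀ y ∈ ⋂ T : ℝ, closure (γ '' Set.Ici T), X y = 0 := by
  intro y hy
  by_contra hXy
  set g : M → ℝ := fun x => mfderiv (𝓡 d) 𝓘(ℝ, ℝ) h x (X x) with hgdef
  -- continuity of g
  have hgc : Continuous g := by
    have h2 : Continuous fun x : M =>
        (tangentBundleModelSpaceHomeomorph 𝓘(ℝ, ℝ)
          (tangentMap (𝓡 d) 𝓘(ℝ, ℝ) h ⟨x, X x⟩)).2 :=
      continuous_snd.comp ((tangentBundleModelSpaceHomeomorph 𝓘(ℝ, ℝ)).continuous.comp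
        ((hh.continuous_tangentMap (by simp)).comp hX.continuous))
    exact h2
  -- h ∘ γ has derivative g (γ t)
  have hd : ∀ t : ℝ, HasDerivAt (h ∘ γ) (g (γ t)) t := by
    intro t
    have h1 : HasMFDerivAt 𝓘(ℝ, ℝ) 𝓘(ℝ, ℝ) (h ∘ γ) t
        ((mfderiv (𝓡 d) 𝓘(ℝ, ℝ) h (γ t)).comp
          ((1 : ℝ →L[ℝ] ℝ).smulRight (X (γ t)))) :=
      ((hh.mdifferentiable (by simp) (γ t)).hasMFDerivAt).comp t (hγ t)
    have h3 : ((mfderiv (𝓡 d) 𝓘(ℝ, ℝ) h (γ t)).comp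
        ((1 : ℝ →L[ℝ] ℝ).smulRight (X (γ t)))) 1 = g (γ t) := by
      simp [hgdef]
    rw [← h3]
    exact HasFDerivAt.hasDerivAt (F := ℝ) (by exact h1.hasFDerivAt)
  -- g is nonpositive
  have hg0 : ∀ x, g x ≤ 0 := by
    intro x
    by_cases hx : X x = 0
    · simp [hgdef, hx]
      rfl
    · exact (hlyap x hx).le
  -- h ∘ γ is antitone
  have hmono : Antitone (h ∘ γ) := by
    apply antitone_of_deriv_nonpos
    · exact fun t => (hd t).differentiableAt
    · intro t; rw [(hd t).deriv]; exact hg0 (γ t)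
  -- the infimum L
  set L := sInf (Set.range (h ∘ γ)) with hLdef
  have hrange_ne : (Set.range (h ∘ γ)).Nonempty := ⟨_, ⟨0, rfl⟩⟩
  have hbdd : BddBelow (Set.range (h ∘ γ)) :=
    ((isCompact_range hh.continuous).bddBelow).mono (Set.range_comp_subset_range γ h)
  have hL1 : ∀ t, L ≤ h (γ t) := fun t => csInf_le hbdd ⟨t, rfl⟩
  have hL2 : ∀ η : ℝ, 0 < η → ∃ t, h (γ t) < L + η := by
    intro η hη
    obtain ⟨_, ⟨t, rfl⟩, hlt⟩ := exists_lt_of_csInf_lt hrange_ne (lt_add_of_pos_right L hη)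
    exact ⟨t, hlt⟩
  -- setup around y
  have hgy : g y < 0 := hlyap y hXy
  set c : ℝ := -g y with hcdef
  have hcpos : 0 < c := by simp only [hcdef]; linarith
  set U₀ : Set M := g ⁻¹' Set.Iio (-(c/2)) with hU₀def
  have hU₀open : IsOpen U₀ := isOpen_Iio.preimage hgc
  have hyU₀ : y ∈ U₀ := by
    simp only [hU₀def, Set.mem_preimage, Set.mem_Iio]
    linarith
  set φ := extChartAt (𝓡 d) y with hφdef
  set z₀ := φ y with hz₀def
  have hytarget : z₀ ∈ φ.target := mem_extChartAt_target y
  have hOopen : IsOpen (φ.target ∩ φ.symm ⁻¹' U₀) :=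
    (continuousOn_extChartAt_symm y).isOpen_inter_preimage (isOpen_extChartAt_target y) hU₀open
  have hz₀O : z₀ ∈ φ.target ∩ φ.symm ⁻¹' U₀ := by
    refine ⟨hytarget, ?_⟩
    simp only [Set.mem_preimage, hz₀def, hφdef]
    rw [extChartAt_to_inv]
    exact hyU₀
  obtain ⟨ρ, hρpos, hρ⟩ := Metric.isOpen_iff.mp hOopen z₀ hz₀O
  set r : ℝ := ρ / 3 with hrdef
  have hrpos : 0 < r := by positivity
  have hball : closedBall z₀ (2*r) ⊆ φ.target ∩ φ.symm ⁻¹' U₀ := by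
    intro z hz
    apply hρ
    rw [mem_ball]
    have := mem_closedBall.mp hz
    rw [hrdef] at this
    rw [hrdef] at *
    linarith
  set S : Set M := φ.symm '' closedBall z₀ (2*r) with hSdef
  have hScpt : IsCompact S := (isCompact_closedBall _ _).image_of_continuousOn
    ((continuousOn_extChartAt_symm y).mono (fun z hz => (hball hz).1))
  have hSsrc : S ⊆ φ.source := by
    rintro _ ⟨z, hz, rfl⟩
    exact φ.map_target (hball hz).1
  have hSU₀ : S ⊆ U₀ := by
    rintro _ ⟨z, hz, rfl⟩
    exact (hball hz).2
  have hmemS : ∀ x : M, x ∈ φ.source → φ x ∈ closedBall z₀ (2*r) → x ∈ S := by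
    intro x hx h2
    exact ⟨φ x, h2, φ.left_inv hx⟩
  have hSball : ∀ x ∈ S, φ x ∈ closedBall z₀ (2*r) := by
    rintro _ ⟨z, hz, rfl⟩
    rw [φ.right_inv (hball hz).1]
    exact hz
  have hyS : y ∈ S := hmemS y (mem_extChartAt_source y) (by
    simp only [mem_closedBall, ← hz₀def, dist_self]
    positivity)
  -- the coordinate representation of X
  set Xc : M → EuclideanSpace ℝ (Fin d) := fun x => tangentCoordChange (𝓡 d) x y x (X x)
    with hXcdef
  have hXccont : ContinuousOn Xc φ.source := by
    have h1 : ContinuousOn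
        (fun x : M => trivializationAt (EuclideanSpace ℝ (Fin d)) (TangentSpace (𝓡 d)) y
          ⟨x, X x⟩) φ.source := by
      apply (trivializationAt (EuclideanSpace ℝ (Fin d)) (TangentSpace (𝓡 d)) y).continuousOn.comp
        hX.continuous.continuousOn
      intro x hx
      rw [TangentBundle.trivializationAt_source]
      rw [hφdef, extChartAt_source] at hx
      exact hx
    exact continuous_snd.comp_continuousOn h1
  -- bound on Xc over S
  obtain ⟨V, hV⟩ := hScpt.exists_bound_of_continuousOn (hXccont.mono hSsrc)
  set V' : ℝ := max V 1 with hV'def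
  have hV'bound : ∀ x ∈ S, ‖Xc x‖ ≤ V' := fun x hx => (hV x hx).trans (le_max_left _ _)
  have hV'pos : (0:ℝ) < V' := lt_of_lt_of_le one_pos (le_max_right _ _)
  set ε : ℝ := r / V' with hεdef
  have hεpos : 0 < ε := div_pos hrpos hV'pos
  have hεV : V' * ε = r := by
    rw [hεdef]
    field_simp
  -- escape-time estimate
  have escape : ∀ s₀ : ℝ, γ s₀ ∈ φ.source → φ (γ s₀) ∈ ball z₀ r →
      ∀ t ∈ Icc s₀ (s₀ + ε), γ t ∈ S := by
    intro s₀ hs₀src hs₀ball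
    set A := {t ∈ Icc s₀ (s₀ + ε) | ∀ t' ∈ Icc s₀ t, γ t' ∈ S} with hAdef
    have hγs₀S : γ s₀ ∈ S := hmemS _ hs₀src (ball_subset_closedBall.trans
      (closedBall_subset_closedBall (by linarith)) hs₀ball)
    have hs₀A : s₀ ∈ A := by
      refine ⟨⟨le_refl _, by linarith⟩, ?_⟩
      intro t' ht'
      have : t' = s₀ := le_antisymm ht'.2 ht'.1
      rw [this]
      exact hγs₀S
    have hAbdd : BddAbove A := ⟨s₀ + ε, fun t ht => ht.1.2⟩
    have hAne : A.Nonempty := ⟨s₀, hs₀A⟩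
    set T := sSup A with hTdef
    have hTmem : T ∈ Icc s₀ (s₀ + ε) :=
      ⟨le_csSup hAbdd hs₀A, csSup_le hAne (fun t ht => ht.1.2)⟩
    have hIco : ∀ t' ∈ Ico s₀ T, γ t' ∈ S := by
      intro t' ht'
      obtain ⟨a, haA, hlt⟩ := exists_lt_of_lt_csSup hAne ht'.2
      exact haA.2 t' ⟨ht'.1, hlt.le⟩
    have hTS : γ T ∈ S := by
      rcases eq_or_lt_of_le hTmem.1 with heq | hlt
      · rw [← heq]; exact hγs₀S
      · have hmem : T ∈ closure (Ico s₀ T) := by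
          rw [closure_Ico hlt.ne]
          exact right_mem_Icc.mpr hlt.le
        have h3 : γ T ∈ closure (γ '' Ico s₀ T) :=
          image_closure_subset_closure_image hγ.continuous (mem_image_of_mem γ hmem)
        have h4 : closure (γ '' Ico s₀ T) ⊆ S := by
          rw [← hScpt.isClosed.closure_eq]
          exact closure_mono (image_subset_iff.mpr hIco)
        exact h4 h3
    have hTA : T ∈ A := by
      refine ⟨hTmem, ?_⟩
      intro t' ht'
      rcases eq_or_lt_of_le ht'.2 with he | hl
      · rw [he]; exact hTS
      · exact hIco t' ⟨ht'.1, hl⟩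
    have hdist : ∀ t ∈ Icc s₀ T, ‖(φ ∘ γ) t - (φ ∘ γ) s₀‖ ≤ V' * (t - s₀) := by
      intro t ht
      have hder : ∀ t' ∈ Icc s₀ T, HasDerivWithinAt (φ ∘ γ) (Xc (γ t')) (Icc s₀ T) t' := by
        intro t' ht'
        exact (key_hasDerivAt X γ hγ y (hSsrc (hTA.2 t' ht'))).hasDerivWithinAt
      have hbound : ∀ t' ∈ Icc s₀ T, ‖Xc (γ t')‖ ≤ V' := fun t' ht' =>
        hV'bound _ (hTA.2 t' ht')
      have := (convex_Icc s₀ T).norm_image_sub_le_of_norm_hasDerivWithin_le hder hbound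
        (left_mem_Icc.mpr hTmem.1) ht
      calc ‖(φ ∘ γ) t - (φ ∘ γ) s₀‖ ≤ V' * ‖t - s₀‖ := this
        _ = V' * (t - s₀) := by rw [Real.norm_eq_abs, abs_of_nonneg (by linarith [ht.1])]
    rcases eq_or_lt_of_le hTmem.2 with heq | hlt
    · intro t ht
      rw [heq] at hTA
      exact hTA.2 t ht
    · exfalso
      have hφT : φ (γ T) ∈ ball z₀ (2*r) := by
        have h1 : ‖φ (γ T) - φ (γ s₀)‖ ≤ V' * (T - s₀) :=
          hdist T (right_mem_Icc.mpr hTmem.1)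
        have h2 : V' * (T - s₀) < V' * ε := by
          apply mul_lt_mul_of_pos_left _ hV'pos
          linarith [hTmem.1]
        have h3 : dist (φ (γ s₀)) z₀ < r := mem_ball.mp hs₀ball
        rw [mem_ball]
        calc dist (φ (γ T)) z₀ ≤ dist (φ (γ T)) (φ (γ s₀)) + dist (φ (γ s₀)) z₀ :=
              dist_triangle _ _ _
          _ = ‖φ (γ T) - φ (γ s₀)‖ + dist (φ (γ s₀)) z₀ := by rw [dist_eq_norm]
          _ < r + r := by
              have := h1.trans_lt h2
              rw [hεV] at this
              linarith
          _ = 2 * r := by ring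
      set N₂ := φ.source ∩ φ ⁻¹' (ball z₀ (2*r)) with hN₂def
      have hN₂open : IsOpen N₂ :=
        (continuousOn_extChartAt y).isOpen_inter_preimage (isOpen_extChartAt_source y)
          isOpen_ball
      have hγT : γ T ∈ N₂ := ⟨hSsrc hTS, hφT⟩
      have hnhds : γ ⁻¹' N₂ ∈ nhds T :=
        hγ.continuous.continuousAt.preimage_mem_nhds (hN₂open.mem_nhds hγT)
      obtain ⟨δ, hδpos, hδ⟩ := Metric.mem_nhds_iff.mp hnhds
      set t₁ := min (T + δ/2) (s₀ + ε) with ht₁def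
      have ht₁T : T < t₁ := lt_min (by linarith) hlt
      have ht₁A : t₁ ∈ A := by
        refine ⟨⟨by linarith [hTmem.1], min_le_right _ _⟩, ?_⟩
        intro t' ht'
        rcases le_or_gt t' T with hle | hgt
        · exact hTA.2 t' ⟨ht'.1, hle⟩
        · have h5 : t' ∈ ball T δ := by
            rw [mem_ball, Real.dist_eq, abs_of_pos (by linarith)]
            have : t' ≤ t₁ := ht'.2
            have : t₁ ≤ T + δ/2 := min_le_left _ _
            linarith
          have h6 : γ t' ∈ N₂ := hδ h5
          exact hmemS _ h6.1 (ball_subset_closedBall h6.2)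
      exact absurd (le_csSup hAbdd ht₁A) (not_le.mpr ht₁T)
  -- decay estimate
  have decay : ∀ s₀ : ℝ, γ s₀ ∈ φ.source → φ (γ s₀) ∈ ball z₀ r →
      h (γ (s₀ + ε)) ≤ h (γ s₀) - c/2 * ε := by
    intro s₀ h1 h2
    have hst := escape s₀ h1 h2
    set q : ℝ → ℝ := fun t => h (γ t) + c/2 * t with hqdef
    have hqd : ∀ t : ℝ, HasDerivAt q (g (γ t) + c/2) t := by
      intro t
      have := (hd t).add ((hasDerivAt_id t).const_mul (c/2))
      simp only [mul_one] at this
      exact this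
    have hanti : AntitoneOn q (Icc s₀ (s₀ + ε)) := by
      apply antitoneOn_of_deriv_nonpos (convex_Icc _ _)
      · exact (fun t _ => ((hqd t).continuousAt.continuousWithinAt))
      · exact fun t _ => (hqd t).differentiableAt.differentiableWithinAt
      · intro t ht
        rw [(hqd t).deriv]
        have htI : t ∈ Icc s₀ (s₀ + ε) := interior_subset ht
        have : g (γ t) < -(c/2) := hSU₀ (hst t htI)
        linarith
    have := hanti (left_mem_Icc.mpr (by linarith)) (right_mem_Icc.mpr (by linarith))
      (by linarith)
    simp only [hqdef] at this
    linarith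
  -- conclusion
  obtain ⟨T₀, hT₀⟩ := hL2 (c/2 * ε) (by positivity)
  have hNopen : IsOpen (φ.source ∩ φ ⁻¹' ball z₀ r) :=
    (continuousOn_extChartAt y).isOpen_inter_preimage (isOpen_extChartAt_source y) isOpen_ball
  have hyN : y ∈ φ.source ∩ φ ⁻¹' ball z₀ r := by
    refine ⟨mem_extChartAt_source y, ?_⟩
    simp only [Set.mem_preimage, mem_ball, ← hz₀def, dist_self]
    exact hrpos
  have hyT₀ : y ∈ closure (γ '' Ici T₀) := Set.mem_iInter.mp hy T₀
  obtain ⟨x, hxN, hximg⟩ := _root_.mem_closure_iff.mp hyT₀ _ hNopen hyN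
  obtain ⟨t₀, ht₀, rfl⟩ := hximg
  have hdec := decay t₀ hxN.1 hxN.2
  have h1 : h (γ t₀) ≤ h (γ T₀) := hmono ht₀
  have h2 : L ≤ h (γ (t₀ + ε)) := hL1 _
  linarith

end Aux

/-- On a closed manifold with a strict Lyapunov function, every accumulation point of an
integral curve as `t → +∞` (i.e. every point of its ω-limit set) is a zero of the vector
field; the same holds as `t → -∞`. -/
theorem stmt_15 {d : ℕ} {M : Type*} [TopologicalSpace M] [T2Space M]
    [SecondCountableTopology M] [CompactSpace M]
    [ChartedSpace (EuclideanSpace ℝ (Fin d)) M]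
    [IsManifold (𝓡 d) (⊤ : ℕ∞) M]
    (X : (x : M) → TangentSpace (𝓡 d) x)
    (hX : ContMDiff (𝓡 d) (𝓡 d).tangent (⊤ : ℕ∞)
      (fun x => (⟨x, X x⟩ : TangentBundle (𝓡 d) M)))
    (h : M → ℝ) (hh : ContMDiff (𝓡 d) 𝓘(ℝ, ℝ) (⊤ : ℕ∞) h)
    (hlyap : ∀ x : M, X x ≠ 0 → (show ℝ from mfderiv (𝓡 d) 𝓘(ℝ, ℝ) h x (X x)) < 0)
    (γ : ℝ → M) (hγ : IsMIntegralCurve γ X) :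
    (∀ y ∈ ⋂ T : ℝ, closure (γ '' Set.Ici T), X y = 0) ∧
    (∀ y ∈ ⋂ T : ℝ, closure (γ '' Set.Iic T), X y = 0) := by
  constructor
  · exact key_omega_zero X hX h hh hlyap γ hγ
  · intro y hy
    have hX' : ContMDiff (𝓡 d) (𝓡 d).tangent (⊤ : ℕ∞)
        (fun x => (⟨x, ((-1 : ℝ) • X) x⟩ : TangentBundle (𝓡 d) M)) := by
      let S : ContMDiffSection (𝓡 d) (EuclideanSpace ℝ (Fin d)) ((⊤ : ℕ∞) : WithTop ℕ∞) (TangentSpace (𝓡 d)) :=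
        ⟨X, hX⟩
      have h1 := ((-1 : ℝ) • S).contMDiff
      have heq : (fun x => (⟨x, ((-1 : ℝ) • X) x⟩ : TangentBundle (𝓡 d) M))
          = fun x => Bundle.TotalSpace.mk' (EuclideanSpace ℝ (Fin d)) x (((-1 : ℝ) • S) x) := by
        funext x
        rfl
      rw [heq]
      exact h1
    have hh' : ContMDiff (𝓡 d) 𝓘(ℝ, ℝ) (⊤ : ℕ∞) (-h) := hh.neg
    have hlyap' : ∀ x : M, ((-1 : ℝ) • X) x ≠ 0 →
        (show ℝ from mfderiv (𝓡 d) 𝓘(ℝ, ℝ) (-h) x (((-1 : ℝ) • X) x)) < 0 := by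
      intro x hx
      have hx0 : X x ≠ 0 := by
        intro hc
        apply hx
        simp [hc]
      have heq2 : (show ℝ from mfderiv (𝓡 d) 𝓘(ℝ, ℝ) (-h) x (((-1 : ℝ) • X) x))
          = (show ℝ from mfderiv (𝓡 d) 𝓘(ℝ, ℝ) h x (X x)) := by
        rw [mfderiv_neg]
        have h1 : ((-1 : ℝ) • X) x = -(X x) := by simp
        rw [h1]
        simp
        show -(mfderiv (𝓡 d) 𝓘(ℝ, ℝ) h x (-X x)) = _
        rw [map_neg]
        exact neg_neg _
      exact heq2.trans_lt (hlyap x hx0)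
    have hγ' : IsMIntegralCurve (γ ∘ (· * (-1 : ℝ))) ((-1 : ℝ) • X) := hγ.comp_mul (-1)
    have hy' : y ∈ ⋂ T : ℝ, closure ((γ ∘ (· * (-1 : ℝ))) '' Set.Ici T) := by
      rw [Set.mem_iInter]
      intro T
      have h1 : (γ ∘ (· * (-1 : ℝ))) '' Set.Ici T = γ '' Set.Iic (-T) := by
        ext u
        simp only [Set.mem_image, Function.comp_apply, Set.mem_Ici, Set.mem_Iic]
        constructor
        · rintro ⟨v, hv, rfl⟩
          exact ⟨v * (-1), by linarith, rfl⟩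
        · rintro ⟨v, hv, rfl⟩
          exact ⟨-v, by linarith, by norm_num⟩
      rw [h1]
      exact Set.mem_iInter.mp hy (-T)
    have hz := key_omega_zero ((-1 : ℝ) • X) hX' (-h) hh' hlyap' _ hγ' y hy'
    have : ((-1 : ℝ) • X) y = -(X y) := by simp
    rw [this] at hz
    exact neg_eq_zero.mp hz
end
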